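/- arXiv:1409.6006 — 5 statements merged into one kernel-verified Lean document; each statement's English description precedes it below -/
import Mathlib

section
/- Let $K$ be a field, $L/K$ a field extension, and $f_0, f_1, \ldots, f_s \in K[[Z]]$ formal power series that are algebraically independent over $L$. If $P \in L[X_0, \ldots, X_s]$ satisfies $P(f_0, \ldots, f_s) \in K[[Z]]$, then $P \in K[X_0, \ldots, X_s]$. -/
/-- if `f_0, …, f_s ∈ K[[Z]]` are algebraically independent over a field
extension `L` of `K`, and `P ∈ L[X_0, …, X_s]` is such that `P(f_0, …, f_s)` has all of
its coefficients in `K`, then `P` has all of its coefficients in `K`. -/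
theorem statement3
    (K L : Type*) [Field K] [Field L] [Algebra K L]
    (s : ℕ) (f : Fin (s + 1) → PowerSeries K)
    (hind : AlgebraicIndependent L (fun i => PowerSeries.map (algebraMap K L) (f i)))
    (P : MvPolynomial (Fin (s + 1)) L)
    (hP : MvPolynomial.aeval (fun i => PowerSeries.map (algebraMap K L) (f i)) P ∈
      Set.range (PowerSeries.map (algebraMap K L))) :
    P ∈ Set.range (MvPolynomial.map (algebraMap K L)) := by
  classical
  obtain ⟨g, hg⟩ := hP
  obtain ⟨π, hπ⟩ := LinearMap.exists_leftInverse_of_injective (Algebra.linearMap K L)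
    (LinearMap.ker_eq_bot.mpr (algebraMap K L).injective)
  have hπ' : ∀ x : K, π (algebraMap K L x) = x := fun x => by
    have := LinearMap.congr_fun hπ x
    simpa using this
  set f' : Fin (s+1) → PowerSeries L := fun i => PowerSeries.map (algebraMap K L) (f i) with hf'
  set P₀ : MvPolynomial (Fin (s+1)) K := AddMonoidAlgebra.ofCoeff (Finsupp.mapRange π (map_zero π) (AddMonoidAlgebra.coeff P)) with hP₀
  have hcoeff : ∀ d, MvPolynomial.coeff d P₀ = π (MvPolynomial.coeff d P) := fun d => rfl
  have hsupp : P₀.support ⊆ P.support := Finsupp.support_mapRange (hf := map_zero π)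
  refine ⟨P₀, ?_⟩
  apply hind
  show MvPolynomial.aeval f' (MvPolynomial.map (algebraMap K L) P₀) = MvPolynomial.aeval f' P
  rw [MvPolynomial.aeval_map_algebraMap]
  have hmon : ∀ d : Fin (s+1) →₀ ℕ, ∀ n : ℕ,
      PowerSeries.coeff n (∏ i, f' i ^ d i)
        = algebraMap K L (PowerSeries.coeff n (∏ i, f i ^ d i)) := by
    intro d n
    have : (∏ i, f' i ^ d i) = PowerSeries.map (algebraMap K L) (∏ i, f i ^ d i) := by
      simp [hf', map_prod, map_pow]
    rw [this, PowerSeries.coeff_map]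
  have hL : MvPolynomial.aeval f' P₀
      = ∑ d ∈ P.support, algebraMap K (PowerSeries L) (MvPolynomial.coeff d P₀)
          * ∏ i, f' i ^ d i := by
    rw [MvPolynomial.aeval_def, MvPolynomial.eval₂_eq']
    refine Finset.sum_subset hsupp ?_
    intro d _ hd
    rw [MvPolynomial.notMem_support_iff.mp hd, map_zero, zero_mul]
  have hR : MvPolynomial.aeval f' P
      = ∑ d ∈ P.support, algebraMap L (PowerSeries L) (MvPolynomial.coeff d P)
          * ∏ i, f' i ^ d i := by
    rw [MvPolynomial.aeval_def, MvPolynomial.eval₂_eq']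
  ext n
  -- coefficient of RHS
  have hRn : PowerSeries.coeff n (MvPolynomial.aeval f' P)
      = algebraMap K L (PowerSeries.coeff n g) := by
    rw [← hg, PowerSeries.coeff_map]
  -- the key identity over K, obtained by applying π
  have key : PowerSeries.coeff n g
      = ∑ d ∈ P.support, π (MvPolynomial.coeff d P)
          * PowerSeries.coeff n (∏ i, f i ^ d i) := by
    have e1 : algebraMap K L (PowerSeries.coeff n g)
        = ∑ d ∈ P.support, MvPolynomial.coeff d P
            * algebraMap K L (PowerSeries.coeff n (∏ i, f i ^ d i)) := by
      rw [← hRn, hR, map_sum]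
      refine Finset.sum_congr rfl fun d _ => ?_
      rw [PowerSeries.algebraMap_apply, Algebra.algebraMap_self_apply, PowerSeries.coeff_C_mul, hmon]
    have := congrArg π e1
    rw [hπ', map_sum] at this
    rw [this]
    refine Finset.sum_congr rfl fun d _ => ?_
    rw [mul_comm, ← Algebra.smul_def, map_smul, smul_eq_mul, mul_comm]
  rw [hRn, hL, map_sum, key, map_sum]
  refine Finset.sum_congr rfl fun d _ => ?_
  rw [hcoeff, PowerSeries.algebraMap_apply, PowerSeries.coeff_C_mul, hmon, map_mul]
end

section
/- Let $q$ be a prime power and let $A^+(j)$ be the set of monic polynomials of degree $j$ in $\mathbb{F}_q[x]$. Then $\sum_{a \in A^+(j)} a(x)^{-1} = \ell_j(x)^{-1}$ in $\mathbb{F}_q(x)$, where $\ell_j(x) = \prod_{k=1}^{j}(x - x^{q^k})$ and $\ell_0(x) = 1$ (Carlitz's identity (9.09)). -/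
noncomputable section

open Polynomial Finset

/-- The indeterminate `x` of `𝔽_q(x)`. -/
def xr (Fq : Type*) [Field Fq] : RatFunc Fq :=
  algebraMap (Polynomial Fq) (RatFunc Fq) X

/-- `ℓ_j(x) = ∏_{k=1}^{j} (x - x^{q^k})`, with `ℓ_0(x) = 1`, in `𝔽_q(x)`. -/
def ellr (Fq : Type*) [Field Fq] (q j : ℕ) : RatFunc Fq :=
  ∏ k ∈ Finset.Icc 1 j, (xr Fq - xr Fq ^ q ^ k)

/-- The monic polynomial of degree `j` with lower-order coefficients `c : Fin j → 𝔽_q`;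
these parametrize the set `A⁺(j)` of monic polynomials of degree exactly `j`. -/
def monicOf (Fq : Type*) [Field Fq] (j : ℕ) (c : Fin j → Fq) : Polynomial Fq :=
  X ^ j + ∑ i : Fin j, C (c i) * X ^ (i : ℕ)

namespace Carlitz6

set_option linter.unusedSectionVars false

/-- Constants of `Fq` inside `RatFunc Fq`. -/
def pc (Fq : Type*) [Field Fq] : Fq →+* RatFunc Fq :=
  (algebraMap (Polynomial Fq) (RatFunc Fq)).comp (Polynomial.C)

/-- The Carlitz-style additive maps `E_j` (as functions on `RatFunc Fq`). -/
def ee (Fq : Type*) [Field Fq] (q : ℕ) : ℕ → RatFunc Fq → RatFunc Fq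
  | 0, t => t
  | j+1, t => (ee Fq q j (xr Fq ^ j)) ^ (q-1) * ee Fq q j t - (ee Fq q j t) ^ q

variable {Fq : Type*} [Field Fq]

lemma ee_zero (q : ℕ) (t : RatFunc Fq) : ee Fq q 0 t = t := rfl

lemma ee_succ (q j : ℕ) (t : RatFunc Fq) :
    ee Fq q (j+1) t = (ee Fq q j (xr Fq ^ j)) ^ (q-1) * ee Fq q j t - (ee Fq q j t) ^ q := rfl

lemma xr_pow (j : ℕ) : xr Fq ^ j = algebraMap (Polynomial Fq) (RatFunc Fq) (X ^ j) := by
  rw [map_pow]; rfl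

variable [Fintype Fq] {q : ℕ}

lemma two_le_q (hq : q = Fintype.card Fq) : 2 ≤ q := by
  rw [hq]; exact Fintype.one_lt_card

lemma qsub (hq : q = Fintype.card Fq) : q - 1 + 1 = q := by
  have := two_le_q hq; omega

lemma pow_qsub (hq : q = Fintype.card Fq) (u : RatFunc Fq) : u ^ q = u ^ (q-1) * u := by
  have h5 := pow_succ u (q-1)
  rw [qsub hq] at h5
  exact h5

lemma frob_add (hq : q = Fintype.card Fq) (u v : RatFunc Fq) :
    (u + v) ^ q = u ^ q + v ^ q := by
  obtain ⟨p, hp⟩ := CharP.exists Fq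
  haveI := hp
  haveI : Fact p.Prime := ⟨CharP.char_is_prime Fq p⟩
  haveI : CharP (RatFunc Fq) p := charP_of_injective_ringHom (pc Fq).injective p
  obtain ⟨n, -, hcard⟩ := FiniteField.card Fq p
  rw [hq, hcard]
  exact add_pow_char_pow u v p n

lemma frob_sub (hq : q = Fintype.card Fq) (u v : RatFunc Fq) :
    (u - v) ^ q = u ^ q - v ^ q := by
  obtain ⟨p, hp⟩ := CharP.exists Fq
  haveI := hp
  haveI : Fact p.Prime := ⟨CharP.char_is_prime Fq p⟩
  haveI : CharP (RatFunc Fq) p := charP_of_injective_ringHom (pc Fq).injective p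
  obtain ⟨n, -, hcard⟩ := FiniteField.card Fq p
  rw [hq, hcard]
  exact sub_pow_char_pow u v n

lemma pc_pow (hq : q = Fintype.card Fq) (c : Fq) : pc Fq c ^ q = pc Fq c := by
  rw [← map_pow, hq, FiniteField.pow_card]

lemma ee_add (hq : q = Fintype.card Fq) (j : ℕ) (u v : RatFunc Fq) :
    ee Fq q j (u + v) = ee Fq q j u + ee Fq q j v := by
  induction j generalizing u v with
  | zero => rfl
  | succ j ih => rw [ee_succ, ee_succ, ee_succ, ih, frob_add hq]; ring

lemma ee_sub (hq : q = Fintype.card Fq) (j : ℕ) (u v : RatFunc Fq) :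
    ee Fq q j (u - v) = ee Fq q j u - ee Fq q j v := by
  induction j generalizing u v with
  | zero => rfl
  | succ j ih => rw [ee_succ, ee_succ, ee_succ, ih, frob_sub hq]; ring

lemma ee_smul (hq : q = Fintype.card Fq) (j : ℕ) (c : Fq) (u : RatFunc Fq) :
    ee Fq q j (pc Fq c * u) = pc Fq c * ee Fq q j u := by
  induction j generalizing u with
  | zero => rfl
  | succ j ih => rw [ee_succ, ee_succ, ih, mul_pow, pc_pow hq]; ring

lemma prod_X_sub_C_eq (hq : q = Fintype.card Fq) :
    ∏ a : Fq, (X - C a) = X ^ q - (X : Fq[X]) := by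
  subst hq
  have h1 : (X ^ Fintype.card Fq - X : Fq[X]).Monic := by
    apply monic_X_pow_sub
    calc degree (X : Fq[X]) ≤ 1 := degree_X_le
    _ < (Fintype.card Fq : WithBot ℕ) := by exact_mod_cast Fintype.one_lt_card
  have h2 := FiniteField.roots_X_pow_card_sub_X Fq
  have h3 : (X ^ Fintype.card Fq - X : Fq[X]).natDegree = Fintype.card Fq :=
    FiniteField.X_pow_card_sub_X_natDegree_eq Fq Fintype.one_lt_card
  have h4 := prod_multiset_X_sub_C_of_monic_of_roots_card_eq h1 (by rw [h2, h3]; simp)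
  rw [h2] at h4
  rw [Finset.prod_eq_multiset_prod]
  exact h4

lemma sum_prod_erase_eq [DecidableEq Fq] (hq : q = Fintype.card Fq) :
    ∑ c : Fq, ∏ b ∈ univ.erase c, (X - C b) = (-1 : Fq[X]) := by
  have hd := congrArg derivative (prod_X_sub_C_eq hq)
  rw [Finset.prod_eq_multiset_prod, derivative_prod] at hd
  have hrhs : derivative (X ^ q - (X : Fq[X])) = -1 := by
    rw [derivative_sub, derivative_X_pow, derivative_X, hq, FiniteField.cast_card_eq_zero,
      map_zero, zero_mul, zero_sub]
  rw [hrhs] at hd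
  rw [← hd, Finset.sum_eq_multiset_sum]
  congr 1
  apply Multiset.map_congr rfl
  intro c _
  rw [derivative_X_sub_C, mul_one, Finset.prod_eq_multiset_prod, Finset.erase_val]

/-- The basic partial-fraction identity: `∑_{c ∈ Fq} 1/(y-c) = 1/(y - y^q)`. -/
lemma base_sum (hq : q = Fintype.card Fq) (y : RatFunc Fq)
    (h : ∀ c : Fq, y - pc Fq c ≠ 0) :
    ∑ c : Fq, (y - pc Fq c)⁻¹ = (y - y ^ q)⁻¹ := by
  classical
  set E : Fq[X] →+* RatFunc Fq := eval₂RingHom (pc Fq) y with hE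
  have hEa : ∀ a : Fq, E (X - C a) = y - pc Fq a := by
    intro a; simp [hE]
  have hprod : ∏ b : Fq, (y - pc Fq b) = y ^ q - y := by
    have h5 := congrArg E (prod_X_sub_C_eq hq)
    rw [map_prod] at h5
    simp only [hEa] at h5
    simpa [hE] using h5
  have hnum : ∑ c : Fq, ∏ b ∈ univ.erase c, (y - pc Fq b) = -1 := by
    have h5 := congrArg E (sum_prod_erase_eq hq)
    rw [map_sum] at h5
    simp only [map_prod, hEa] at h5
    simpa using h5
  have hterm : ∀ c : Fq, (y - pc Fq c)⁻¹ =
      (∏ b ∈ univ.erase c, (y - pc Fq b)) * (y ^ q - y)⁻¹ := by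
    intro c
    have hsplit : y ^ q - y = (y - pc Fq c) * ∏ b ∈ univ.erase c, (y - pc Fq b) := by
      rw [← hprod, ← Finset.mul_prod_erase univ _ (mem_univ c)]
    have hne : (∏ b ∈ univ.erase c, (y - pc Fq b)) ≠ 0 :=
      Finset.prod_ne_zero_iff.2 fun b _ => h b
    rw [hsplit, mul_inv, mul_comm ((y - pc Fq c)⁻¹), ← mul_assoc,
      mul_inv_cancel₀ hne, one_mul]
  calc ∑ c : Fq, (y - pc Fq c)⁻¹
      = ∑ c : Fq, (∏ b ∈ univ.erase c, (y - pc Fq b)) * (y ^ q - y)⁻¹ :=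
        Finset.sum_congr rfl fun c _ => hterm c
    _ = (∑ c : Fq, ∏ b ∈ univ.erase c, (y - pc Fq b)) * (y ^ q - y)⁻¹ := by
        rw [Finset.sum_mul]
    _ = (-1) * (y ^ q - y)⁻¹ := by rw [hnum]
    _ = (y - y ^ q)⁻¹ := by rw [neg_one_mul, ← inv_neg, neg_sub]

/-- Scaled version: `∑_{c ∈ Fq} 1/(t + c·s) = s^{q-1}/(s^{q-1} t - t^q)`. -/
lemma scaled_sum (hq : q = Fintype.card Fq) (s t : RatFunc Fq) (hs : s ≠ 0)
    (h : ∀ c : Fq, t + pc Fq c * s ≠ 0) :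
    ∑ c : Fq, (t + pc Fq c * s)⁻¹ = s ^ (q-1) * (s ^ (q-1) * t - t ^ q)⁻¹ := by
  classical
  obtain ⟨y, hys⟩ : ∃ y : RatFunc Fq, y * s = t := ⟨t * s⁻¹, by field_simp⟩
  have hterm : ∀ c : Fq, t + pc Fq c * s = (y - pc Fq (-c)) * s := by
    intro c
    rw [map_neg, sub_neg_eq_add, add_mul, hys]
  have hyne : ∀ c : Fq, y - pc Fq c ≠ 0 := by
    intro c hzero
    apply h (-c)
    rw [hterm (-c), neg_neg, hzero, zero_mul]
  have hre : ∑ c : Fq, (t + pc Fq c * s)⁻¹ = ∑ c : Fq, ((y - pc Fq c) * s)⁻¹ := by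
    rw [show (fun c : Fq => (t + pc Fq c * s)⁻¹) = fun c => ((y - pc Fq (-c)) * s)⁻¹ from
      funext fun c => by rw [hterm c]]
    exact Fintype.sum_equiv (Equiv.neg Fq) _ _ (fun c => by simp)
  rw [hre]
  have hsum : ∑ c : Fq, ((y - pc Fq c) * s)⁻¹ = (∑ c : Fq, (y - pc Fq c)⁻¹) * s⁻¹ := by
    rw [Finset.sum_mul]
    exact Finset.sum_congr rfl fun c _ => by rw [mul_inv]
  rw [hsum, base_sum hq y hyne]
  have hsq : s ^ q = s ^ (q-1) * s := pow_qsub hq s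
  have hs1 : (s : RatFunc Fq) ^ (q-1) ≠ 0 := pow_ne_zero _ hs
  have hkey : s ^ (q-1) * t - t ^ q = (y - y ^ q) * s ^ q := by
    have h1 : (y - y ^ q) * s ^ q = (y * s) * s ^ (q-1) - (y * s) ^ q := by
      rw [mul_pow y s q, hsq]; ring
    rw [hys] at h1
    rw [h1]; ring
  have hss : s ^ (q-1) * (s ^ q)⁻¹ = s⁻¹ := by
    rw [hsq, mul_inv, ← mul_assoc, mul_inv_cancel₀ hs1, one_mul]
  rw [hkey, mul_inv, ← hss]
  ring

/-- Any `(q-1)`-st root of unity in `Fq(x)` is a nonzero constant. -/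
lemma root_of_unity_const (hq : q = Fintype.card Fq) (z : RatFunc Fq)
    (hz : z ^ (q - 1) = 1) : ∃ c : Fq, c ≠ 0 ∧ z = pc Fq c := by
  classical
  have hq2 := two_le_q hq
  have hPne : (X ^ (q-1) - C 1 : (RatFunc Fq)[X]) ≠ 0 := X_pow_sub_C_ne_zero (by omega) 1
  have hdeg : (X ^ (q-1) - C 1 : (RatFunc Fq)[X]).natDegree = q - 1 := natDegree_X_pow_sub_C
  have hroot : ∀ w : RatFunc Fq, w ^ (q-1) = 1 →
      w ∈ (X ^ (q-1) - C 1 : (RatFunc Fq)[X]).roots := by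
    intro w hw
    rw [mem_roots hPne]
    simp [IsRoot, hw]
  set T : Finset (RatFunc Fq) := (univ.erase (0 : Fq)).image (pc Fq) with hT
  have hTsub : T ⊆ (X ^ (q-1) - C 1 : (RatFunc Fq)[X]).roots.toFinset := by
    intro w hw
    rw [hT, Finset.mem_image] at hw
    obtain ⟨c, hc, rfl⟩ := hw
    rw [Multiset.mem_toFinset]
    apply hroot
    rw [← map_pow, ← map_one (pc Fq)]
    congr 1
    rw [hq]
    exact FiniteField.pow_card_sub_one_eq_one c (Finset.ne_of_mem_erase hc)
  have hTcard : T.card = q - 1 := by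
    rw [hT, Finset.card_image_of_injective _ (pc Fq).injective,
      Finset.card_erase_of_mem (mem_univ _), Finset.card_univ, hq]
  by_contra hcon
  push_neg at hcon
  have hzT : z ∉ T := by
    intro hzt
    rw [hT, Finset.mem_image] at hzt
    obtain ⟨c, hc, hcz⟩ := hzt
    exact hcon c (Finset.ne_of_mem_erase hc) hcz.symm
  have hins : insert z T ⊆ (X ^ (q-1) - C 1 : (RatFunc Fq)[X]).roots.toFinset := by
    intro w hw
    rcases Finset.mem_insert.1 hw with h1 | h1
    · subst h1
      rw [Multiset.mem_toFinset]; exact hroot w hz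
    · exact hTsub h1
  have hcard : (insert z T).card = q := by
    rw [Finset.card_insert_of_notMem hzT, hTcard]; omega
  have hle : (insert z T).card ≤ (X ^ (q-1) - C 1 : (RatFunc Fq)[X]).roots.toFinset.card :=
    Finset.card_le_card hins
  have hfin : (X ^ (q-1) - C 1 : (RatFunc Fq)[X]).roots.toFinset.card ≤ q - 1 := by
    calc (X ^ (q-1) - C 1 : (RatFunc Fq)[X]).roots.toFinset.card
        ≤ Multiset.card (X ^ (q-1) - C 1 : (RatFunc Fq)[X]).roots :=
          (X ^ (q-1) - C 1 : (RatFunc Fq)[X]).roots.toFinset_card_le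
    _ ≤ (X ^ (q-1) - C 1 : (RatFunc Fq)[X]).natDegree :=
        (X ^ (q-1) - C 1 : (RatFunc Fq)[X]).card_roots'
    _ = q - 1 := hdeg
  omega

/-- Nonvanishing: `E_j(p) ≠ 0` whenever `p` is a polynomial of degree `≥ j`. -/
lemma ee_ne_zero (hq : q = Fintype.card Fq) (j : ℕ) :
    ∀ p : Polynomial Fq, p ≠ 0 → j ≤ p.natDegree →
      ee Fq q j (algebraMap (Polynomial Fq) (RatFunc Fq) p) ≠ 0 := by
  induction j with
  | zero =>
    intro p hp _
    rw [ee_zero]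
    exact RatFunc.algebraMap_ne_zero hp
  | succ j ih =>
    intro p hp hdeg hcontra
    have hq2 := two_le_q hq
    set iK := algebraMap (Polynomial Fq) (RatFunc Fq) with hiK
    set E := ee Fq q j (iK p) with hEdef
    have hE : E ≠ 0 := ih p hp (le_trans (Nat.le_succ j) hdeg)
    have hS : ee Fq q j (xr Fq ^ j) ≠ 0 := by
      rw [xr_pow]
      exact ih (X ^ j) (pow_ne_zero _ X_ne_zero) (le_of_eq (natDegree_X_pow j).symm)
    set S := ee Fq q j (xr Fq ^ j) with hSdef
    rw [ee_succ, ← hSdef, ← hEdef] at hcontra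
    have hEq : S ^ (q-1) * E = E ^ q := sub_eq_zero.1 hcontra
    have hfrac : (E * S⁻¹) ^ (q-1) = 1 := by
      have hEq1 : E ^ (q-1) = S ^ (q-1) := by
        rw [pow_qsub hq E] at hEq
        exact mul_right_cancel₀ hE hEq.symm
      rw [mul_pow, inv_pow, hEq1, mul_inv_cancel₀ (pow_ne_zero _ hS)]
    obtain ⟨c, hc0, hcz⟩ := root_of_unity_const hq _ hfrac
    have hES : E = pc Fq c * S := by
      rw [← hcz, mul_assoc, inv_mul_cancel₀ hS, mul_one]
    have hzero : ee Fq q j (iK (p - C c * X ^ j)) = 0 := by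
      rw [map_sub, ee_sub hq, ← hEdef]
      rw [show iK (C c * X ^ j) = pc Fq c * (xr Fq ^ j) from by rw [map_mul, xr_pow]; rfl]
      rw [ee_smul hq, ← hSdef, ← hES, sub_self]
    set r := p - C c * X ^ j with hr
    have hgdeg : (C c * X ^ j).natDegree = j := natDegree_C_mul_X_pow j c hc0
    have hrne : r ≠ 0 := by
      intro h0
      have hpc : p = C c * X ^ j := sub_eq_zero.1 h0
      rw [hpc, hgdeg] at hdeg; omega
    have hrdeg : j ≤ r.natDegree := by
      have hre : p = r + C c * X ^ j := by rw [hr]; ring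
      have h1 := natDegree_add_le r (C c * X ^ j)
      rw [← hre, hgdeg] at h1
      omega
    exact ih r hrne hrdeg hzero

lemma s_ne (hq : q = Fintype.card Fq) (j : ℕ) : ee Fq q j (xr Fq ^ j) ≠ 0 := by
  rw [xr_pow]
  exact ee_ne_zero hq j (X ^ j) (pow_ne_zero _ X_ne_zero) (le_of_eq (natDegree_X_pow j).symm)

/-- The joint recursion for the values `E_j(x^m)` (statements (B) and (C)). -/
lemma ee_xr_rec (hq : q = Fintype.card Fq) (n : ℕ) :
    (∀ m : ℕ, ee Fq q (n+1) (xr Fq ^ (m+1)) =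
        xr Fq * ee Fq q (n+1) (xr Fq ^ m)
          + (xr Fq - xr Fq ^ q ^ (n+1)) * (ee Fq q n (xr Fq ^ m)) ^ q)
    ∧ ee Fq q (n+1) (xr Fq ^ (n+1)) =
        (xr Fq - xr Fq ^ q ^ (n+1)) * (ee Fq q n (xr Fq ^ n)) ^ q := by
  induction n with
  | zero =>
    have h1 : ∀ t : RatFunc Fq, ee Fq q 1 t = t - t ^ q := by
      intro t
      rw [ee_succ, ee_zero, ee_zero, pow_zero, one_pow, one_mul]
    constructor
    · intro m
      rw [h1, h1, ee_zero, pow_one]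
      ring
    · rw [h1, ee_zero, pow_one, pow_zero, one_pow, pow_one]
      ring
  | succ n ihn =>
    obtain ⟨IHB, IHC⟩ := ihn
    have hLq : (xr Fq - xr Fq ^ q ^ (n+1)) ^ q = xr Fq ^ q - xr Fq ^ q ^ (n+2) := by
      rw [frob_sub hq, ← pow_mul, ← pow_succ]
    have key : ∀ B1 : RatFunc Fq,
        (ee Fq q (n+1) (xr Fq ^ (n+1))) ^ (q-1) * ((xr Fq - xr Fq ^ q ^ (n+1)) * B1 ^ q)
          - (xr Fq - xr Fq ^ q ^ (n+1)) ^ q * (B1 ^ q) ^ q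
        = (xr Fq - xr Fq ^ q ^ (n+1)) ^ q
            * ((ee Fq q n (xr Fq ^ n)) ^ (q-1) * B1 - B1 ^ q) ^ q := by
      intro B1
      have e1 : ((ee Fq q n (xr Fq ^ n)) ^ (q-1) * B1 - B1 ^ q) ^ q
          = ((ee Fq q n (xr Fq ^ n)) ^ (q-1)) ^ q * B1 ^ q - (B1 ^ q) ^ q := by
        rw [frob_sub hq, mul_pow]
      rw [IHC, e1, pow_qsub hq (xr Fq - xr Fq ^ q ^ (n+1)),
        mul_pow (xr Fq - xr Fq ^ q ^ (n+1)) ((ee Fq q n (xr Fq ^ n)) ^ q) (q-1),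
        ← pow_mul (ee Fq q n (xr Fq ^ n)) q (q-1),
        ← pow_mul (ee Fq q n (xr Fq ^ n)) (q-1) q,
        Nat.mul_comm q (q-1)]
      ring
    have hsuccA : ∀ t : RatFunc Fq, ee Fq q (n+2) t =
        (ee Fq q (n+1) (xr Fq ^ (n+1))) ^ (q-1) * ee Fq q (n+1) t
          - (ee Fq q (n+1) t) ^ q := fun t => ee_succ q (n+1) t
    have hsuccB : ∀ t : RatFunc Fq, ee Fq q (n+1) t =
        (ee Fq q n (xr Fq ^ n)) ^ (q-1) * ee Fq q n t - (ee Fq q n t) ^ q :=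
      fun t => ee_succ q n t
    constructor
    · intro m
      rw [hsuccA (xr Fq ^ (m+1)), hsuccA (xr Fq ^ m), IHB m]
      rw [frob_add hq, mul_pow (xr Fq) (ee Fq q (n+1) (xr Fq ^ m)) q,
        mul_pow (xr Fq - xr Fq ^ q ^ (n+1)) ((ee Fq q n (xr Fq ^ m)) ^ q) q]
      have hkey3 := key (ee Fq q n (xr Fq ^ m))
      rw [← hsuccB (xr Fq ^ m)] at hkey3
      linear_combination hkey3 + (ee Fq q (n+1) (xr Fq ^ m)) ^ q * hLq
    · rw [hsuccA (xr Fq ^ (n+2)), IHB (n+1)]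
      rw [frob_add hq, mul_pow (xr Fq) (ee Fq q (n+1) (xr Fq ^ (n+1))) q,
        mul_pow (xr Fq - xr Fq ^ q ^ (n+1)) ((ee Fq q n (xr Fq ^ (n+1))) ^ q) q]
      have hkey2 := key (ee Fq q n (xr Fq ^ (n+1)))
      rw [← hsuccB (xr Fq ^ (n+1))] at hkey2
      linear_combination hkey2 + (ee Fq q (n+1) (xr Fq ^ (n+1))) ^ q * hLq
        - xr Fq * pow_qsub hq (ee Fq q (n+1) (xr Fq ^ (n+1)))

/-- The closed form for `s_j` in terms of `ℓ_j`. -/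
lemma s_eq_ell (hq : q = Fintype.card Fq) (j : ℕ) :
    ee Fq q j (xr Fq ^ j) = ellr Fq q j * ∏ i ∈ range j, (ee Fq q i (xr Fq ^ i)) ^ (q-1) := by
  induction j with
  | zero => simp [ellr, ee_zero]
  | succ j ihj =>
    have hC := (ee_xr_rec hq j).2
    rw [hC, pow_qsub hq (ee Fq q j (xr Fq ^ j))]
    rw [show ellr Fq q (j+1) = ellr Fq q j * (xr Fq - xr Fq ^ q ^ (j+1)) from by
      rw [ellr, ellr, Finset.prod_Icc_succ_top (by omega : 1 ≤ j+1)]]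
    rw [Finset.prod_range_succ, ihj]
    ring

lemma monicOf_monic (j : ℕ) (c : Fin j → Fq) : (monicOf Fq j c).Monic := by
  cases j with
  | zero =>
    have h1 : monicOf Fq 0 c = 1 := by simp [monicOf]
    rw [h1]; exact monic_one
  | succ n =>
    apply monic_X_pow_add
    refine lt_of_le_of_lt (Polynomial.degree_sum_le _ _) ?_
    rw [Finset.sup_lt_iff (by exact_mod_cast WithBot.bot_lt_coe (n+1))]
    intro i _
    refine lt_of_le_of_lt (degree_C_mul_X_pow_le _ _) ?_
    exact_mod_cast i.isLt

lemma monicOf_cons (j : ℕ) (e : Fq) (t : Fin j → Fq) :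
    monicOf Fq (j+1) (Fin.cons e t) = X * monicOf Fq j t + C e := by
  rw [monicOf, monicOf, Fin.sum_univ_succ]
  simp only [Fin.cons_zero, Fin.cons_succ, Fin.val_zero, Fin.val_succ, pow_zero, mul_one]
  rw [mul_add, Finset.mul_sum]
  have hsum : ∑ i : Fin j, C (t i) * X ^ ((i : ℕ)+1)
      = ∑ i : Fin j, X * (C (t i) * X ^ (i : ℕ)) :=
    Finset.sum_congr rfl fun i _ => by ring
  rw [hsum]
  ring

/-- The main induction: generalized Carlitz sum. -/
lemma Fsum (hq : q = Fintype.card Fq) (j : ℕ) : ∀ k : ℕ,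
    ∑ c : Fin j → Fq,
        (ee Fq q k (xr Fq ^ k * algebraMap (Polynomial Fq) (RatFunc Fq) (monicOf Fq j c)))⁻¹
      = (∏ i ∈ range j, (ee Fq q (k+i) (xr Fq ^ (k+i))) ^ (q-1))
          * (ee Fq q (k+j) (xr Fq ^ (k+j)))⁻¹ := by
  induction j with
  | zero =>
    intro k
    have h1 : ∀ c : Fin 0 → Fq, monicOf Fq 0 c = 1 := fun c => by simp [monicOf]
    simp [h1]
  | succ j ihj =>
    intro k
    set iK := algebraMap (Polynomial Fq) (RatFunc Fq) with hiK
    have hre : ∑ c : Fin (j+1) → Fq, (ee Fq q k (xr Fq ^ k * iK (monicOf Fq (j+1) c)))⁻¹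
        = ∑ t : Fin j → Fq, ∑ e : Fq,
            (ee Fq q k (xr Fq ^ k * iK (X * monicOf Fq j t + C e)))⁻¹ := by
      rw [← Fintype.sum_equiv (Fin.consEquiv (fun _ : Fin (j+1) => Fq))
        (fun p => (ee Fq q k (xr Fq ^ k * iK (X * monicOf Fq j p.2 + C p.1)))⁻¹)
        (fun c => (ee Fq q k (xr Fq ^ k * iK (monicOf Fq (j+1) c)))⁻¹)
        (fun p => by
          show (ee Fq q k (xr Fq ^ k * iK (X * monicOf Fq j p.2 + C p.1)))⁻¹
              = (ee Fq q k (xr Fq ^ k * iK (monicOf Fq (j+1) (Fin.cons p.1 p.2))))⁻¹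
          rw [monicOf_cons])]
      rw [Fintype.sum_prod_type]
      exact Finset.sum_comm
    rw [hre]
    have hinner : ∀ t : Fin j → Fq,
        ∑ e : Fq, (ee Fq q k (xr Fq ^ k * iK (X * monicOf Fq j t + C e)))⁻¹
          = (ee Fq q k (xr Fq ^ k)) ^ (q-1)
              * (ee Fq q (k+1) (xr Fq ^ (k+1) * iK (monicOf Fq j t)))⁻¹ := by
      intro t
      set a := monicOf Fq j t with ha
      have hmona : a.Monic := monicOf_monic j t
      have hXa : (X * a).Monic := monic_X.mul hmona
      have haddm : ∀ e : Fq, (X * a + C e).Monic := by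
        intro e
        apply hXa.add_of_left
        refine lt_of_le_of_lt degree_C_le ?_
        rw [degree_eq_natDegree hXa.ne_zero, monic_X.natDegree_mul hmona, natDegree_X]
        exact_mod_cast Nat.add_pos_left Nat.one_pos a.natDegree
      have harg : ∀ e : Fq, xr Fq ^ k * iK (X * a + C e)
          = ee Fq q 0 (xr Fq ^ (k+1) * iK a) + pc Fq e * xr Fq ^ k := by
        intro e
        rw [ee_zero, map_add, map_mul]
        rw [show iK X = xr Fq from rfl, show iK (C e) = pc Fq e from rfl]
        ring
      have hsplit : ∀ e : Fq,
          ee Fq q k (xr Fq ^ k * iK (X * a + C e))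
            = ee Fq q k (xr Fq ^ (k+1) * iK a) + pc Fq e * ee Fq q k (xr Fq ^ k) := by
        intro e
        rw [harg e, ee_zero, ee_add hq, ee_smul hq]
      have hS := s_ne hq k
      have hnz : ∀ e : Fq,
          ee Fq q k (xr Fq ^ (k+1) * iK a) + pc Fq e * ee Fq q k (xr Fq ^ k) ≠ 0 := by
        intro e
        rw [← hsplit e]
        have hmul : xr Fq ^ k * iK (X * a + C e) = iK (X ^ k * (X * a + C e)) := by
          rw [map_mul, xr_pow]
        rw [hmul]
        have hpne : (X ^ k * (X * a + C e) : Polynomial Fq) ≠ 0 :=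
          mul_ne_zero (pow_ne_zero _ X_ne_zero) (haddm e).ne_zero
        apply ee_ne_zero hq _ _ hpne
        calc k = (X ^ k : Polynomial Fq).natDegree := (natDegree_X_pow k).symm
          _ ≤ _ := natDegree_le_of_dvd (dvd_mul_right _ _) hpne
      calc ∑ e : Fq, (ee Fq q k (xr Fq ^ k * iK (X * a + C e)))⁻¹
          = ∑ e : Fq, (ee Fq q k (xr Fq ^ (k+1) * iK a)
              + pc Fq e * ee Fq q k (xr Fq ^ k))⁻¹ :=
            Finset.sum_congr rfl fun e _ => by rw [hsplit e]
        _ = (ee Fq q k (xr Fq ^ k)) ^ (q-1)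
              * ((ee Fq q k (xr Fq ^ k)) ^ (q-1) * ee Fq q k (xr Fq ^ (k+1) * iK a)
                  - (ee Fq q k (xr Fq ^ (k+1) * iK a)) ^ q)⁻¹ :=
            scaled_sum hq _ _ hS hnz
        _ = (ee Fq q k (xr Fq ^ k)) ^ (q-1)
              * (ee Fq q (k+1) (xr Fq ^ (k+1) * iK a))⁻¹ := by
            rw [ee_succ q k (xr Fq ^ (k+1) * iK a)]
    rw [show (fun t : Fin j → Fq => ∑ e : Fq,
        (ee Fq q k (xr Fq ^ k * iK (X * monicOf Fq j t + C e)))⁻¹)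
      = fun t => (ee Fq q k (xr Fq ^ k)) ^ (q-1)
          * (ee Fq q (k+1) (xr Fq ^ (k+1) * iK (monicOf Fq j t)))⁻¹ from
      funext fun t => hinner t]
    rw [← Finset.mul_sum, ihj (k+1)]
    rw [Finset.prod_range_succ']
    have hpr : ∏ i ∈ range j, (ee Fq q (k+1+i) (xr Fq ^ (k+1+i))) ^ (q-1)
        = ∏ i ∈ range j, (ee Fq q (k+(i+1))) (xr Fq ^ (k+(i+1))) ^ (q-1) :=
      Finset.prod_congr rfl fun i _ => by rw [show k+1+i = k+(i+1) from by omega]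
    rw [hpr, show k+1+j = k+(j+1) from by omega]
    simp only [Nat.add_zero]
    ring

end Carlitz6

/-- Carlitz, (9.09): `∑_{a ∈ A⁺(j)} a(x)⁻¹ = ℓ_j(x)⁻¹` in `𝔽_q(x)`. -/
theorem statement6
    (Fq : Type*) [Field Fq] [Fintype Fq] (q : ℕ) (hq : q = Fintype.card Fq) (j : ℕ) :
    ∑ c : Fin j → Fq, (algebraMap (Polynomial Fq) (RatFunc Fq) (monicOf Fq j c))⁻¹ =
      (ellr Fq q j)⁻¹ := by
  classical
  have h1 : ∀ c : Fin j → Fq,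
      algebraMap (Polynomial Fq) (RatFunc Fq) (monicOf Fq j c)
        = Carlitz6.ee Fq q 0 (xr Fq ^ 0 * algebraMap (Polynomial Fq) (RatFunc Fq)
            (monicOf Fq j c)) := by
    intro c
    rw [Carlitz6.ee_zero, pow_zero, one_mul]
  rw [show (fun c : Fin j → Fq =>
      (algebraMap (Polynomial Fq) (RatFunc Fq) (monicOf Fq j c))⁻¹)
    = fun c => (Carlitz6.ee Fq q 0 (xr Fq ^ 0 * algebraMap (Polynomial Fq) (RatFunc Fq)
        (monicOf Fq j c)))⁻¹ from funext fun c => by rw [← h1 c]]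
  rw [Carlitz6.Fsum hq j 0]
  simp only [Nat.zero_add]
  rw [Carlitz6.s_eq_ell hq j]
  have hPne : (∏ i ∈ Finset.range j, (Carlitz6.ee Fq q i (xr Fq ^ i)) ^ (q-1)) ≠ 0 :=
    Finset.prod_ne_zero_iff.2 fun i _ => pow_ne_zero _ (Carlitz6.s_ne hq i)
  rw [mul_inv, mul_comm (ellr Fq q j)⁻¹, ← mul_assoc, mul_inv_cancel₀ hPne, one_mul]
end
end

section
/- In the Tate algebra $\mathbb{T}$ with Frobenius twist $\tau$, the set of solutions $X \in \mathbb{T}$ of the difference equation $\tau(X) = (t - \theta) X$ is a free $\mathbb{F}_q[t]$-module of rank one, generated by the Anderson–Thakur function $\omega(t) = \lambda_\theta \prod_{i \geq 0}(1 - t/\theta^{q^i})^{-1}$. -/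
noncomputable section

open Polynomial Filter PowerSeries

/-- Membership in the Tate algebra `𝕋 ⊆ ℂ∞[[t]]`: the coefficients tend to `0`. -/
def InTate (Cinf : Type*) [NormedField Cinf] (f : PowerSeries Cinf) : Prop :=
  Tendsto (fun m : ℕ => ‖PowerSeries.coeff m f‖) atTop (nhds 0)


private lemma aux_coeff_XsubC_mul {K : Type*} [CommRing K] (θ : K) (S : PowerSeries K) (m : ℕ) :
    PowerSeries.coeff m ((PowerSeries.X - PowerSeries.C θ) * S) =
      (if m = 0 then 0 else PowerSeries.coeff (m-1) S) - θ * PowerSeries.coeff m S := by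
  rw [sub_mul, map_sub, PowerSeries.coeff_C_mul]
  congr 1
  cases m with
  | zero => simp [PowerSeries.coeff_zero_eq_constantCoeff]
  | succ n => simp [PowerSeries.coeff_succ_X_mul]

private lemma aux_prod_coeff_bound {K : Type*} [NormedField K] [IsUltrametricDist K]
    {r : ℝ} (hr : 0 ≤ r) (N : ℕ) (c : ℕ → K) (hc : ∀ i, ‖c i‖ ≤ r) :
    ∀ m : ℕ, ‖PowerSeries.coeff m
      (∏ i ∈ Finset.range N, (1 - PowerSeries.C (c i) * PowerSeries.X))‖ ≤ r ^ m := by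
  induction N with
  | zero =>
    intro m
    rw [Finset.prod_range_zero]
    cases m with
    | zero => simp
    | succ n => simp [pow_nonneg hr]
  | succ N ih =>
    intro m
    rw [Finset.prod_range_succ]
    set V := ∏ i ∈ Finset.range N, (1 - PowerSeries.C (c i) * PowerSeries.X) with hV
    have key : V * (1 - PowerSeries.C (c N) * PowerSeries.X)
        = V - PowerSeries.C (c N) * (PowerSeries.X * V) := by ring
    rw [key, map_sub, PowerSeries.coeff_C_mul]
    cases m with
    | zero =>
      simp only [PowerSeries.coeff_zero_eq_constantCoeff, map_mul,
        PowerSeries.constantCoeff_X, zero_mul, mul_zero, sub_zero]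
      exact (by simpa using ih 0)
    | succ n =>
      rw [PowerSeries.coeff_succ_X_mul, sub_eq_add_neg]
      refine le_trans (IsUltrametricDist.norm_add_le_max _ _) (max_le (ih (n+1)) ?_)
      rw [norm_neg]
      calc ‖c N * PowerSeries.coeff n V‖ ≤ r * r ^ n := by
            exact (norm_mul_le _ _).trans (mul_le_mul (hc N) (ih n) (norm_nonneg _) hr)
        _ = r ^ (n + 1) := by ring

private lemma aux_inv_coeff_bound {K : Type*} [NormedField K] [IsUltrametricDist K]
    (v : PowerSeries K) (hv : PowerSeries.constantCoeff v = 1)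
    {r : ℝ} (hr : 0 ≤ r) (hb : ∀ m, ‖PowerSeries.coeff m v‖ ≤ r ^ m) :
    ∀ m, ‖PowerSeries.coeff m v⁻¹‖ ≤ r ^ m := by
  intro m
  induction m using Nat.strong_induction_on with
  | _ m ih =>
    rw [PowerSeries.coeff_inv]
    split_ifs with h
    · subst h; simp [hv]
    · rw [hv, inv_one, neg_one_mul, norm_neg]
      apply IsUltrametricDist.norm_sum_le_of_forall_le_of_nonneg (pow_nonneg hr m)
      rintro ⟨i, j⟩ hij
      rw [Finset.HasAntidiagonal.mem_antidiagonal] at hij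
      dsimp only
      split_ifs with hj
      · calc ‖PowerSeries.coeff i v * PowerSeries.coeff j v⁻¹‖
            ≤ r ^ i * r ^ j :=
              (norm_mul_le _ _).trans
                (mul_le_mul (hb i) (ih j hj) (norm_nonneg _) (pow_nonneg hr i))
          _ = r ^ m := by rw [← pow_add, hij]
      · simpa using pow_nonneg hr m


private lemma aux_fix {Fq : Type*} [Field Fq] [Fintype Fq]
    {Cinf : Type*} [Field Cinf] [Algebra Fq Cinf]
    (q : ℕ) (hq : q = Fintype.card Fq) (x : Cinf) (hx : x ^ q = x) :
    ∃ b : Fq, algebraMap Fq Cinf b = x := by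
  classical
  have hq2 : 2 ≤ q := by rw [hq]; exact Fintype.one_lt_card
  set Pq : Polynomial Cinf := Polynomial.X ^ q - Polynomial.X with hPq
  have hdeg : Pq.natDegree = q := by
    rw [hPq, Polynomial.natDegree_sub_eq_left_of_natDegree_lt, Polynomial.natDegree_X_pow]
    rw [Polynomial.natDegree_X, Polynomial.natDegree_X_pow]
    omega
  have hPq0 : Pq ≠ 0 := fun h => by rw [h, Polynomial.natDegree_zero] at hdeg; omega
  have himage : (Finset.univ.image (algebraMap Fq Cinf)) ⊆ Pq.roots.toFinset := by
    intro y hy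
    simp only [Finset.mem_image] at hy
    obtain ⟨b, -, rfl⟩ := hy
    rw [Multiset.mem_toFinset, Polynomial.mem_roots hPq0]
    simp only [Polynomial.IsRoot, hPq, Polynomial.eval_sub, Polynomial.eval_pow,
      Polynomial.eval_X]
    rw [← map_pow, hq, FiniteField.pow_card, sub_self]
  have hcard : q ≤ (Finset.univ.image (algebraMap Fq Cinf)).card := by
    rw [Finset.card_image_of_injective _ (algebraMap Fq Cinf).injective,
      Finset.card_univ, hq]
  have hcard2 : Pq.roots.toFinset.card ≤ q :=
    le_trans (Multiset.toFinset_card_le _)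
      (le_trans (Polynomial.card_roots' Pq) (le_of_eq hdeg))
  have heq := Finset.eq_of_subset_of_card_le himage (le_trans hcard2 hcard)
  have hxr : x ∈ Pq.roots.toFinset := by
    rw [Multiset.mem_toFinset, Polynomial.mem_roots hPq0]
    simp [Polynomial.IsRoot, hPq, hx]
  rw [← heq] at hxr
  simp only [Finset.mem_image] at hxr
  obtain ⟨b, -, hb⟩ := hxr
  exact ⟨b, hb⟩

/-- the set of solutions `X ∈ 𝕋` of `τ(X) = (t - θ) X` is a free
`𝔽_q[t]`-module of rank one generated by the Anderson–Thakur function `ω`: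
every solution in `𝕋` equals `a(t)·ω` with `a ∈ 𝔽_q[t]`, uniquely. -/
theorem statement10
    (Fq : Type*) [Field Fq] [Fintype Fq]
    (Cinf : Type*) [NormedField Cinf] [CompleteSpace Cinf] [IsAlgClosed Cinf]
    [IsUltrametricDist Cinf] [Algebra Fq Cinf] (θ : Cinf)
    (q : ℕ) (hq : q = Fintype.card Fq) (hθ : ‖θ‖ = (q : ℝ))
    (p k : ℕ) [ExpChar Cinf p] (hpk : q = p ^ k)
    (lam : Cinf) (hlam : lam ^ (q - 1) = -θ)
    (ω : PowerSeries Cinf)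
    (hω : ∀ m : ℕ,
      Tendsto
        (fun N : ℕ => PowerSeries.coeff m
          (PowerSeries.C lam *
            ∏ i ∈ Finset.range N,
              (1 - PowerSeries.C ((θ ^ q ^ i)⁻¹) * PowerSeries.X)⁻¹))
        atTop (nhds (PowerSeries.coeff m ω))) :
    (∀ X : PowerSeries Cinf, InTate Cinf X →
      (PowerSeries.map (iterateFrobenius Cinf p k) X = (PowerSeries.X - PowerSeries.C θ) * X ↔
        ∃ a : Polynomial Fq,
          X = PowerSeries.map (algebraMap Fq Cinf) (↑a : PowerSeries Fq) * ω)) ∧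
    Function.Injective
      (fun a : Polynomial Fq =>
        PowerSeries.map (algebraMap Fq Cinf) (↑a : PowerSeries Fq) * ω) := by
  classical
  have hq2 : 2 ≤ q := by rw [hq]; exact Fintype.one_lt_card
  have hqR : (2:ℝ) ≤ (q:ℝ) := by exact_mod_cast hq2
  have hθ0 : θ ≠ 0 := by
    intro h; rw [h, norm_zero] at hθ; linarith
  have hlam0 : lam ≠ 0 := by
    intro h
    rw [h, zero_pow (by omega : q - 1 ≠ 0)] at hlam
    exact hθ0 (by simpa using hlam.symm)
  have hlamn : (0:ℝ) < ‖lam‖ := norm_pos_iff.mpr hlam0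
  set r : ℝ := (q:ℝ)⁻¹ with hrdef
  have hr0 : 0 ≤ r := by positivity
  have hr1 : r < 1 := by rw [hrdef]; exact inv_lt_one_of_one_lt₀ (by linarith)
  set τ := iterateFrobenius Cinf p k with hτdef
  have hτ : ∀ x : Cinf, τ x = x ^ q := fun x => by
    rw [hτdef, iterateFrobenius_def, hpk]
  set c : ℕ → Cinf := fun i => (θ ^ q ^ i)⁻¹ with hcdef
  set u : ℕ → PowerSeries Cinf :=
    fun i => 1 - PowerSeries.C (c i) * PowerSeries.X with hudef
  set P : ℕ → PowerSeries Cinf :=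
    fun N => PowerSeries.C lam * ∏ i ∈ Finset.range N, (u i)⁻¹ with hPdef
  have hωP : ∀ m, Tendsto (fun N => PowerSeries.coeff m (P N)) atTop
      (nhds (PowerSeries.coeff m ω)) := hω
  have hu1 : ∀ i, PowerSeries.constantCoeff (u i) = 1 := fun i => by
    simp [hudef]
  have huinv : ∀ i, (u i)⁻¹ * u i = 1 := fun i =>
    PowerSeries.inv_mul_cancel _ (by rw [hu1]; exact one_ne_zero)
  have hcr : ∀ i, ‖c i‖ ≤ r := by
    intro i
    rw [hcdef]
    simp only
    rw [norm_inv, norm_pow, hθ, hrdef]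
    have h1 : (q:ℝ) ≤ (q:ℝ) ^ q ^ i :=
      le_self_pow₀ (by linarith) (pow_ne_zero i (by omega))
    exact inv_anti₀ (by linarith) h1
  have hprodc : ∀ N,
      PowerSeries.constantCoeff (∏ i ∈ Finset.range N, u i) = 1 := fun N => by
    rw [map_prod]; simp [hu1]
  have hprodinv : ∀ N,
      (∏ i ∈ Finset.range N, (u i)⁻¹) = (∏ i ∈ Finset.range N, u i)⁻¹ := by
    intro N
    rw [PowerSeries.eq_inv_iff_mul_eq_one (by rw [hprodc]; exact one_ne_zero)]
    rw [← Finset.prod_mul_distrib]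
    simp [huinv]
  have hPbound : ∀ N m, ‖PowerSeries.coeff m (P N)‖ ≤ ‖lam‖ * r ^ m := by
    intro N m
    rw [hPdef]
    simp only
    rw [PowerSeries.coeff_C_mul, norm_mul]
    refine mul_le_mul_of_nonneg_left ?_ (norm_nonneg lam)
    rw [hprodinv]
    exact aux_inv_coeff_bound _ (hprodc N) hr0 (aux_prod_coeff_bound hr0 N c hcr) m
  have hωbound : ∀ m, ‖PowerSeries.coeff m ω‖ ≤ ‖lam‖ * r ^ m := fun m =>
    le_of_tendsto (hωP m).norm (Filter.Eventually.of_forall fun N => hPbound N m)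
  have hω0 : PowerSeries.coeff 0 ω = lam := by
    have hconst : ∀ N, PowerSeries.coeff 0 (P N) = lam := by
      intro N
      rw [hPdef]
      simp only
      rw [PowerSeries.coeff_zero_eq_constantCoeff, map_mul, PowerSeries.constantCoeff_C,
        map_prod]
      simp [PowerSeries.constantCoeff_inv, hu1]
    have h1 : Tendsto (fun N => PowerSeries.coeff 0 (P N)) atTop (nhds lam) := by
      simp only [hconst]; exact tendsto_const_nhds
    exact tendsto_nhds_unique (hωP 0) h1
  have hω0' : PowerSeries.constantCoeff ω = lam := by
    rw [← PowerSeries.coeff_zero_eq_constantCoeff]; exact hω0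
  have hωne : ω ≠ 0 := fun h => hlam0 (by rw [h, map_zero] at hω0'; exact hω0'.symm)
  have hτc : ∀ i, τ (c i) = c (i + 1) := by
    intro i
    rw [hτ, hcdef]
    simp only
    rw [inv_pow, ← pow_mul, ← pow_succ]
  have hτu : ∀ i, PowerSeries.map τ (u i) = u (i + 1) := by
    intro i
    rw [hudef]
    simp only
    rw [map_sub, map_one, map_mul, PowerSeries.map_C, PowerSeries.map_X, hτc]
  have hτuinv : ∀ i, PowerSeries.map τ ((u i)⁻¹) = (u (i + 1))⁻¹ := by
    intro i
    rw [PowerSeries.eq_inv_iff_mul_eq_one (by rw [hu1]; exact one_ne_zero)]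
    rw [← hτu i, ← map_mul, huinv i, map_one]
  have hlamq : lam ^ q = -θ * lam := by
    have h1 : q = (q - 1) + 1 := by omega
    rw [h1, pow_succ, hlam]
  have hPrec : ∀ N, PowerSeries.map τ (P N)
      = (PowerSeries.X - PowerSeries.C θ) * P (N + 1) := by
    intro N
    rw [hPdef]
    simp only
    rw [map_mul, PowerSeries.map_C, map_prod]
    simp only [hτuinv]
    have hshift : (∏ i ∈ Finset.range N, (u (i + 1))⁻¹)
        = (∏ i ∈ Finset.range (N + 1), (u i)⁻¹) * u 0 := by
      rw [Finset.prod_range_succ', mul_assoc, huinv 0, mul_one]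
    rw [hshift, hτ]
    have hkey : PowerSeries.C (lam ^ q) * u 0
        = (PowerSeries.X - PowerSeries.C θ) * PowerSeries.C lam := by
      have hu0 : u 0 = 1 - PowerSeries.C θ⁻¹ * PowerSeries.X := by
        rw [hudef, hcdef]; simp only; rw [pow_zero, pow_one]
      have h6 : PowerSeries.C θ * PowerSeries.C θ⁻¹ = 1 := by
        rw [← map_mul, mul_inv_cancel₀ hθ0, map_one]
      rw [hlamq, hu0, neg_mul, map_neg, map_mul]
      calc -(PowerSeries.C θ * PowerSeries.C lam)
            * (1 - PowerSeries.C θ⁻¹ * PowerSeries.X)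
          = -(PowerSeries.C θ * PowerSeries.C lam)
            + (PowerSeries.C θ * PowerSeries.C θ⁻¹)
              * (PowerSeries.C lam * PowerSeries.X) := by ring
        _ = (PowerSeries.X - PowerSeries.C θ) * PowerSeries.C lam := by
            rw [h6]; ring
    calc PowerSeries.C (lam ^ q)
          * ((∏ i ∈ Finset.range (N + 1), (u i)⁻¹) * u 0)
        = (PowerSeries.C (lam ^ q) * u 0)
          * (∏ i ∈ Finset.range (N + 1), (u i)⁻¹) := by ring
      _ = (PowerSeries.X - PowerSeries.C θ)
          * (PowerSeries.C lam * ∏ i ∈ Finset.range (N + 1), (u i)⁻¹) := by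
            rw [hkey]; ring
  have hωeq : PowerSeries.map τ ω = (PowerSeries.X - PowerSeries.C θ) * ω := by
    ext m : 1
    have h1 : Tendsto (fun N => (PowerSeries.coeff m (P N)) ^ q) atTop
        (nhds ((PowerSeries.coeff m ω) ^ q)) := (hωP m).pow q
    have h2 : Tendsto (fun N => (PowerSeries.coeff m (P N)) ^ q) atTop
        (nhds (PowerSeries.coeff m
          ((PowerSeries.X - PowerSeries.C θ) * ω))) := by
      have heq2 : ∀ N, (PowerSeries.coeff m (P N)) ^ q
          = (if m = 0 then 0 else PowerSeries.coeff (m - 1) (P (N + 1)))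
            - θ * PowerSeries.coeff m (P (N + 1)) := by
        intro N
        rw [← hτ, ← PowerSeries.coeff_map, hPrec N, aux_coeff_XsubC_mul]
      rw [aux_coeff_XsubC_mul]
      simp only [heq2]
      apply Tendsto.sub
      · by_cases hm : m = 0
        · simp only [hm, if_pos]
          exact tendsto_const_nhds
        · simp only [if_neg hm]
          have := (hωP (m - 1)).comp (tendsto_add_atTop_nat 1)
          simpa [Function.comp_def] using this
      · have := (hωP m).comp (tendsto_add_atTop_nat 1)
        exact Tendsto.const_mul θ (by simpa [Function.comp_def] using this)
    rw [PowerSeries.coeff_map, hτ]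
    exact tendsto_nhds_unique h1 h2
  have hτfixa : ∀ a : Polynomial Fq,
      PowerSeries.map τ (PowerSeries.map (algebraMap Fq Cinf) (↑a : PowerSeries Fq))
        = PowerSeries.map (algebraMap Fq Cinf) (↑a : PowerSeries Fq) := by
    intro a
    ext m : 1
    rw [PowerSeries.coeff_map, PowerSeries.coeff_map, hτ, ← map_pow]
    congr 1
    rw [hq]
    exact FiniteField.pow_card _
  have hXCθ : (PowerSeries.X - PowerSeries.C θ : PowerSeries Cinf) ≠ 0 := by
    intro h
    have h3 := congrArg (PowerSeries.coeff 1) h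
    rw [map_sub, PowerSeries.coeff_one_X, PowerSeries.coeff_C, map_zero] at h3
    simp at h3
  have himage_norm : ∀ b : Fq, b ≠ 0 → ‖algebraMap Fq Cinf b‖ = 1 := by
    intro b hb
    have h1 : (algebraMap Fq Cinf b) ^ (q - 1) = 1 := by
      rw [← map_pow, hq, FiniteField.pow_card_sub_one_eq_one b hb, map_one]
    have h2 : ‖algebraMap Fq Cinf b‖ ^ (q - 1) = 1 := by rw [← norm_pow, h1, norm_one]
    by_contra hne
    rcases lt_or_gt_of_ne hne with h | h
    · have h4 := pow_lt_one₀ (norm_nonneg _) h (by omega : q - 1 ≠ 0)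
      rw [h2] at h4; exact lt_irrefl _ h4
    · have h4 := one_lt_pow₀ h (by omega : q - 1 ≠ 0)
      rw [h2] at h4; exact lt_irrefl _ h4
  refine ⟨fun Xs hT => ⟨fun hX => ?_, fun h => ?_⟩, fun a b hab => ?_⟩
  · -- forward direction
    set f := Xs * ω⁻¹ with hfdef
    have hfω : f * ω = Xs := by
      rw [hfdef, mul_assoc, PowerSeries.inv_mul_cancel ω (by rw [hω0']; exact hlam0),
        mul_one]
    have hcancel : ((PowerSeries.X - PowerSeries.C θ) * ω) ≠ 0 :=
      mul_ne_zero hXCθ hωne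
    have hτf : PowerSeries.map τ f = f := by
      apply mul_right_cancel₀ hcancel
      calc PowerSeries.map τ f * ((PowerSeries.X - PowerSeries.C θ) * ω)
          = PowerSeries.map τ f * PowerSeries.map τ ω := by rw [hωeq]
        _ = PowerSeries.map τ (f * ω) := (map_mul _ f ω).symm
        _ = PowerSeries.map τ Xs := by rw [hfω]
        _ = (PowerSeries.X - PowerSeries.C θ) * Xs := hX
        _ = (PowerSeries.X - PowerSeries.C θ) * (f * ω) := by rw [hfω]
        _ = f * ((PowerSeries.X - PowerSeries.C θ) * ω) := by ring
    have hfq : ∀ m, (PowerSeries.coeff m f) ^ q = PowerSeries.coeff m f := by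
      intro m
      have h5 := congrArg (PowerSeries.coeff m) hτf
      rwa [PowerSeries.coeff_map, hτ] at h5
    have hall : ∀ m, ∃ b : Fq, algebraMap Fq Cinf b = PowerSeries.coeff m f :=
      fun m => aux_fix q hq _ (hfq m)
    choose g hg using hall
    have hfnorm1 : ∀ m, PowerSeries.coeff m f ≠ 0 →
        ‖PowerSeries.coeff m f‖ = 1 := by
      intro m hm
      rw [← hg m] at hm ⊢
      exact himage_norm (g m) (fun h6 => hm (by rw [h6, map_zero]))
    have hfnorm_le : ∀ m, ‖PowerSeries.coeff m f‖ ≤ 1 := by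
      intro m
      by_cases hm : PowerSeries.coeff m f = 0
      · simp [hm]
      · exact le_of_eq (hfnorm1 m hm)
    have hXnorm : ∀ m, PowerSeries.coeff m f ≠ 0 →
        ‖PowerSeries.coeff m Xs‖ = ‖lam‖ := by
      intro m hm
      rw [← hfω, PowerSeries.coeff_mul,
        ← Finset.sum_erase_add _ _ (by simp : ((m, 0) : ℕ × ℕ) ∈ Finset.HasAntidiagonal.antidiagonal m)]
      have hterm : ‖PowerSeries.coeff (m, 0).1 f
          * PowerSeries.coeff (m, 0).2 ω‖ = ‖lam‖ := by
        simp only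
        rw [norm_mul, hω0, hfnorm1 m hm, one_mul]
      have hTle : ‖∑ x ∈ (Finset.HasAntidiagonal.antidiagonal m).erase (m, 0),
          PowerSeries.coeff x.1 f * PowerSeries.coeff x.2 ω‖ ≤ ‖lam‖ * r := by
        apply IsUltrametricDist.norm_sum_le_of_forall_le_of_nonneg (by positivity)
        rintro ⟨i, j⟩ hij
        rw [Finset.mem_erase, Finset.HasAntidiagonal.mem_antidiagonal] at hij
        have hj : j ≠ 0 := by
          rintro rfl
          have h7 : i = m := by simpa using hij.2
          exact hij.1 (by rw [h7])
        calc ‖PowerSeries.coeff i f * PowerSeries.coeff j ω‖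
            ≤ 1 * (‖lam‖ * r ^ j) :=
              (norm_mul_le _ _).trans
                (mul_le_mul (hfnorm_le i) (hωbound j) (norm_nonneg _) zero_le_one)
          _ ≤ ‖lam‖ * r := by
              rw [one_mul]
              refine mul_le_mul_of_nonneg_left ?_ (norm_nonneg lam)
              calc r ^ j ≤ r ^ 1 := pow_le_pow_of_le_one hr0 hr1.le (by omega)
                _ = r := pow_one r
      have hlt : ‖∑ x ∈ (Finset.HasAntidiagonal.antidiagonal m).erase (m, 0),
          PowerSeries.coeff x.1 f * PowerSeries.coeff x.2 ω‖
          < ‖PowerSeries.coeff (m, 0).1 f * PowerSeries.coeff (m, 0).2 ω‖ :=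
        lt_of_le_of_lt hTle (by rw [hterm]; exact mul_lt_of_lt_one_right hlamn hr1)
      rw [IsUltrametricDist.norm_add_eq_max_of_norm_ne_norm (ne_of_lt hlt),
        max_eq_right hlt.le, hterm]
    have hev : ∀ᶠ m in atTop, ‖PowerSeries.coeff m Xs‖ < ‖lam‖ :=
      hT.eventually_lt_const hlamn
    obtain ⟨M, hM⟩ := Filter.eventually_atTop.mp hev
    have hfzero : ∀ m, M ≤ m → PowerSeries.coeff m f = 0 := by
      intro m hm
      by_contra hne
      exact absurd (hXnorm m hne) (ne_of_lt (hM m hm))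
    refine ⟨∑ n ∈ Finset.range M, Polynomial.C (g n) * Polynomial.X ^ n, ?_⟩
    have hacoeff : ∀ n, (∑ n ∈ Finset.range M,
        Polynomial.C (g n) * Polynomial.X ^ n).coeff n = if n < M then g n else 0 := by
      intro n
      rw [Polynomial.finset_sum_coeff]
      simp only [Polynomial.coeff_C_mul, Polynomial.coeff_X_pow, mul_ite, mul_one, mul_zero]
      simp [Finset.sum_ite_eq, Finset.mem_range, eq_comm]
    rw [← hfω]
    congr 1
    ext n : 1
    rw [PowerSeries.coeff_map, Polynomial.coeff_coe, hacoeff n]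
    by_cases hn : n < M
    · rw [if_pos hn, hg]
    · rw [if_neg hn, map_zero, hfzero n (le_of_not_gt hn)]
  · -- reverse direction
    obtain ⟨a, ha⟩ := h
    rw [ha, map_mul, hτfixa a, hωeq]
    ring
  · -- injectivity
    simp only at hab
    have h8 := mul_right_cancel₀ hωne hab
    apply Polynomial.ext
    intro n
    have h9 := congrArg (PowerSeries.coeff n) h8
    rw [PowerSeries.coeff_map, PowerSeries.coeff_map, Polynomial.coeff_coe,
      Polynomial.coeff_coe] at h9
    exact (algebraMap Fq Cinf).injective h9
end
end

section
/- Define $\chi_t(z) = \omega(t)^{-1} f_t(z)$ for $z \in \mathbb{C}_\infty$, where $f_t$ is the Anderson generating function and $\omega$ the Anderson–Thakur function. Then $\chi_t : \mathbb{C}_\infty \to \mathbb{T}$ is $\mathbb{F}_q$-linear and satisfies the bound $\|\chi_t(z)\| \leq \max\{1, |e_C(z)|^{1/q}\}$ for all $z \in \mathbb{C}_\infty$, where $\|\cdot\|$ is the Gauss norm on $\mathbb{T}$. -/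
noncomputable section
open Polynomial Filter PowerSeries


/-- `d_i = ∏_{j=0}^{i-1} (θ^{q^i} - θ^{q^j})`, with `d_0 = 1`. -/
def carlitzD (Cinf : Type*) [Field Cinf] (θ : Cinf) (q i : ℕ) : Cinf :=
  ∏ j ∈ Finset.range i, (θ ^ q ^ i - θ ^ q ^ j)

/-- The Carlitz exponential `exp_C(z) = ∑_{i ≥ 0} d_i⁻¹ z^{q^i}`. -/
def expC (Cinf : Type*) [NormedField Cinf] (θ : Cinf) (q : ℕ) (z : Cinf) : Cinf :=
  ∑' i : ℕ, (carlitzD Cinf θ q i)⁻¹ * z ^ q ^ i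

/-- `e_C(z) = exp_C(π̃ z)`. -/
def eC (Cinf : Type*) [NormedField Cinf] (θ π : Cinf) (q : ℕ) (z : Cinf) : Cinf :=
  expC Cinf θ q (π * z)

/-- The `N`-th partial sum of the Anderson generating function
`f_t(z) = ∑_{n ≥ 0} (π̃ z)^{q^n} / ((θ^{q^n} - t) d_n)`, as a power series in `t`. -/
def ftPartial (Cinf : Type*) [NormedField Cinf] (θ π : Cinf) (q : ℕ) (z : Cinf) (N : ℕ) :
    PowerSeries Cinf :=
  ∑ n ∈ Finset.range N,
    PowerSeries.C (R := Cinf) ((π * z) ^ q ^ n * (carlitzD Cinf θ q n)⁻¹) *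
      (PowerSeries.C (R := Cinf) (θ ^ q ^ n) - PowerSeries.X)⁻¹

/-- The Gauss norm `‖∑ c_m t^m‖ = sup_m |c_m|` on `ℂ∞[[t]]` (finite on the Tate algebra). -/
def gaussNorm (Cinf : Type*) [NormedField Cinf] (f : PowerSeries Cinf) : ℝ :=
  ⨆ m : ℕ, ‖PowerSeries.coeff (R := Cinf) m f‖

section Aux
variable {K : Type*} [NormedField K] [IsUltrametricDist K]

lemma aux_norm_sub_le_max (x y : K) : ‖x - y‖ ≤ max ‖x‖ ‖y‖ := by
  rw [sub_eq_add_neg]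
  simpa using IsUltrametricDist.norm_add_le_max x (-y)

lemma aux_norm_sub_eq {x y : K} (h : ‖y‖ < ‖x‖) : ‖x - y‖ = ‖x‖ := by
  refine le_antisymm ((aux_norm_sub_le_max x y).trans (by simp [h.le])) ?_
  have h2 : ‖x‖ ≤ max ‖x - y‖ ‖y‖ := by
    simpa [sub_add_cancel] using IsUltrametricDist.norm_add_le_max (x - y) y
  rcases max_cases ‖x - y‖ ‖y‖ with ⟨he, _⟩ | ⟨he, _⟩
  · rwa [he] at h2
  · rw [he] at h2; exact absurd (h2.trans_lt h) (lt_irrefl _).elim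

lemma aux_coeff_inv_bound (g : PowerSeries K) (h0 : PowerSeries.constantCoeff (R := K) g ≠ 0)
    (hb : ∀ m, ‖PowerSeries.coeff (R := K) m g‖ ≤ ‖PowerSeries.constantCoeff (R := K) g‖) (m : ℕ) :
    ‖PowerSeries.coeff (R := K) m g⁻¹‖ ≤ ‖PowerSeries.constantCoeff (R := K) g‖⁻¹ := by
  induction m using Nat.strong_induction_on with
  | _ m ih =>
    rw [PowerSeries.coeff_inv]
    split_ifs with h
    · rw [norm_inv]
    · rw [norm_mul, norm_neg, norm_inv]
      have hsum : ‖∑ x ∈ Finset.HasAntidiagonal.antidiagonal m,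
          if x.2 < m then PowerSeries.coeff (R := K) x.1 g * PowerSeries.coeff (R := K) x.2 g⁻¹ else 0‖ ≤ 1 := by
        apply IsUltrametricDist.norm_sum_le_of_forall_le_of_nonneg zero_le_one
        intro i hi
        split_ifs with hlt
        · rw [norm_mul]
          calc ‖PowerSeries.coeff (R := K) i.1 g‖ * ‖PowerSeries.coeff (R := K) i.2 g⁻¹‖
              ≤ ‖PowerSeries.constantCoeff (R := K) g‖ * ‖PowerSeries.constantCoeff (R := K) g‖⁻¹ :=
            mul_le_mul (hb i.1) (ih i.2 hlt) (norm_nonneg _) (norm_nonneg _)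
          _ = 1 := mul_inv_cancel₀ (by simpa using h0)
        · simp
      calc ‖(PowerSeries.constantCoeff (R := K) g)‖⁻¹ * _ ≤ ‖(PowerSeries.constantCoeff (R := K) g)‖⁻¹ * 1 :=
        mul_le_mul_of_nonneg_left hsum (by positivity)
      _ = _ := mul_one _

lemma aux_geom_inv {Kf : Type*} [Field Kf] (a : Kf) :
    (1 - PowerSeries.C (R := Kf) a * PowerSeries.X)⁻¹ = PowerSeries.mk fun m => a ^ m := by
  symm
  rw [PowerSeries.eq_inv_iff_mul_eq_one (by simp)]
  ext n
  cases n with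
  | zero => simp
  | succ n =>
    rw [mul_sub, mul_one, map_sub, ← mul_assoc]
    have h1 : (PowerSeries.mk fun m => a ^ m) * PowerSeries.C (R := Kf) a
        = PowerSeries.mk fun m => a ^ (m + 1) := by
      ext j; rw [PowerSeries.coeff_mul_C]; simp [pow_succ]
    rw [h1, PowerSeries.coeff_succ_mul_X]
    simp [PowerSeries.coeff_one]

lemma aux_summable [CompleteSpace K] {f : ℕ → K} (hf : Tendsto f atTop (nhds 0)) :
    Summable f := by
  rw [summable_iff_vanishing]
  intro e he
  rcases Metric.mem_nhds_iff.1 he with ⟨ε, hε, hball⟩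
  rcases Metric.tendsto_atTop.1 hf (ε / 2) (by positivity) with ⟨N, hN⟩
  refine ⟨Finset.range N, fun t ht => hball ?_⟩
  rw [Metric.mem_ball, dist_zero_right]
  have hle : ‖∑ n ∈ t, f n‖ ≤ ε / 2 := by
    apply IsUltrametricDist.norm_sum_le_of_forall_le_of_nonneg (by positivity)
    intro i hi
    have hiN : N ≤ i := by
      by_contra hcon
      exact (Finset.disjoint_left.1 ht hi) (Finset.mem_range.2 (lt_of_not_ge hcon))
    simpa [dist_zero_right] using (hN i hiN).le
  linarith

end Aux

set_option maxHeartbeats 1000000 in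
/-- the function `χ_t(z) = ω(t)⁻¹ f_t(z)` is `𝔽_q`-linear in `z` and
satisfies `‖χ_t(z)‖ ≤ max{1, |e_C(z)|^{1/q}}` for all `z ∈ ℂ∞` (Gauss norm on `𝕋`). -/
theorem statement13
    (Fq : Type*) [Field Fq] [Fintype Fq]
    (Cinf : Type*) [NormedField Cinf] [CompleteSpace Cinf] [IsAlgClosed Cinf]
    [IsUltrametricDist Cinf] [Algebra Fq Cinf] (θ : Cinf)
    (q : ℕ) (hq : q = Fintype.card Fq) (hθ : ‖θ‖ = (q : ℝ))
    (π : Cinf) (hπ : ‖π‖ = (q : ℝ) ^ ((q : ℝ) / ((q : ℝ) - 1)))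
    (hker : ∀ z : Cinf, expC Cinf θ q z = 0 ↔ ∃ a : Polynomial Fq, z = π * aeval θ a)
    (lam : Cinf) (hlam : lam ^ (q - 1) = -θ)
    (ω : PowerSeries Cinf)
    (hω : ∀ m : ℕ,
      Tendsto
        (fun N : ℕ => PowerSeries.coeff (R := Cinf) m
          (PowerSeries.C (R := Cinf) lam *
            ∏ i ∈ Finset.range N,
              (1 - PowerSeries.C (R := Cinf) ((θ ^ q ^ i)⁻¹) * PowerSeries.X)⁻¹))
        atTop (nhds (PowerSeries.coeff (R := Cinf) m ω)))
    (ft : Cinf → PowerSeries Cinf)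
    (hft : ∀ (z : Cinf) (m : ℕ),
      Tendsto (fun N : ℕ => PowerSeries.coeff (R := Cinf) m (ftPartial Cinf θ π q z N))
        atTop (nhds (PowerSeries.coeff (R := Cinf) m (ft z))))
    (chi : Cinf → PowerSeries Cinf)
    (hchi : ∀ z : Cinf, chi z = ω⁻¹ * ft z) :
    (∀ z w : Cinf, chi (z + w) = chi z + chi w) ∧
    (∀ (c : Fq) (z : Cinf),
      chi (algebraMap Fq Cinf c * z) = PowerSeries.C (R := Cinf) (algebraMap Fq Cinf c) * chi z) ∧
    (∀ z : Cinf,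
      gaussNorm Cinf (chi z) ≤ max 1 (‖eC Cinf θ π q z‖ ^ ((1 : ℝ) / (q : ℝ)))) := by
  classical
  -- basic numerology
  have hq2 : 1 < q := by rw [hq]; exact Fintype.one_lt_card
  have hq0 : q ≠ 0 := by omega
  have hqR1 : (1:ℝ) < (q:ℝ) := by exact_mod_cast hq2
  have hθ0 : θ ≠ 0 := by
    intro h; rw [h, norm_zero] at hθ; linarith
  have hlam0 : lam ≠ 0 := by
    intro h
    rw [h, zero_pow (by omega : q - 1 ≠ 0)] at hlam
    exact hθ0 (by simpa using hlam.symm)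
  have hlam1 : 1 < ‖lam‖ := by
    by_contra hcon
    push_neg at hcon
    have h1 : ‖lam ^ (q-1)‖ ≤ 1 := by
      rw [norm_pow]; exact pow_le_one₀ (norm_nonneg _) hcon
    rw [hlam, norm_neg, hθ] at h1
    linarith
  -- characteristic
  obtain ⟨k, hpk, hcard⟩ := FiniteField.card Fq (ringChar Fq)
  haveI hfact : Fact (ringChar Fq).Prime := ⟨hpk⟩
  haveI : CharP Cinf (ringChar Fq) :=
    charP_of_injective_algebraMap (algebraMap Fq Cinf).injective (ringChar Fq)
  haveI : ExpChar Cinf (ringChar Fq) := ExpChar.prime hpk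
  have hk : q = (ringChar Fq) ^ (k:ℕ) := by rw [hq, hcard]
  set φ : Cinf →+* Cinf := iterateFrobenius Cinf (ringChar Fq) k with hφdef
  have hφ : ∀ x : Cinf, φ x = x ^ q := by
    intro x; rw [hφdef, iterateFrobenius_def, ← hk]
  have hadd_pow : ∀ (n : ℕ) (x y : Cinf), (x + y) ^ q ^ n = x ^ q ^ n + y ^ q ^ n := by
    intro n x y
    have h := map_add (iterateFrobenius Cinf (ringChar Fq) (k * n)) x y
    simpa only [iterateFrobenius_def, pow_mul, ← hk] using h
  -- Carlitz d facts
  have hpowlt : ∀ {i j : ℕ}, j < i → ‖θ ^ q ^ j‖ < ‖θ ^ q ^ i‖ := by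
    intro i j hij
    rw [norm_pow, norm_pow, hθ]
    exact pow_lt_pow_right₀ hqR1 (Nat.pow_lt_pow_right hq2 hij)
  have hdnorm : ∀ n, ‖carlitzD Cinf θ q n‖ = (((q:ℝ) ^ q ^ n)) ^ n := by
    intro n
    rw [carlitzD, norm_prod]
    rw [Finset.prod_congr rfl (fun j hj =>
      (aux_norm_sub_eq (hpowlt (Finset.mem_range.1 hj))).trans (by rw [norm_pow, hθ]))]
    rw [Finset.prod_const, Finset.card_range]
  have hdne : ∀ n, carlitzD Cinf θ q n ≠ 0 := by
    intro n h
    have h1 := hdnorm n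
    rw [h, norm_zero] at h1
    have h2 : (0:ℝ) < ((q:ℝ) ^ q ^ n) ^ n := by positivity
    linarith [h1 ▸ h2]
  have hdstep : ∀ n, carlitzD Cinf θ q (n+1)
      = (θ ^ q ^ (n+1) - θ) * (carlitzD Cinf θ q n) ^ q := by
    intro n
    have hterm : ∀ j : ℕ, (θ ^ q ^ n - θ ^ q ^ j) ^ q = θ ^ q ^ (n+1) - θ ^ q ^ (j+1) := by
      intro j
      rw [← hφ, map_sub, hφ, hφ, ← pow_mul, ← pow_mul, ← pow_succ, ← pow_succ]
    calc carlitzD Cinf θ q (n+1)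
        = (∏ j ∈ Finset.range n, (θ ^ q ^ (n+1) - θ ^ q ^ (j+1)))
            * (θ ^ q ^ (n+1) - θ ^ q ^ 0) := Finset.prod_range_succ' _ _
      _ = (θ ^ q ^ (n+1) - θ) * (carlitzD Cinf θ q n) ^ q := by
          rw [pow_zero, pow_one, mul_comm, carlitzD, ← Finset.prod_pow]
          congr 1
          exact (Finset.prod_congr rfl fun j _ => (hterm j).symm)
  have hθqne : ∀ n : ℕ, θ ^ q ^ (n+1) - θ ≠ 0 := by
    intro n h
    have h1 : ‖θ‖ < ‖θ ^ q ^ (n+1)‖ := by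
      have := hpowlt (i := n+1) (j := 0) (Nat.succ_pos n)
      simpa using this
    have h2 := aux_norm_sub_eq h1
    rw [h, norm_zero] at h2
    exact absurd h2.symm (norm_pos_iff.mpr (pow_ne_zero _ hθ0)).ne'
  -- 𝔽q-linearity of ft
  have hftP_add : ∀ (z w : Cinf) (N : ℕ), ftPartial Cinf θ π q (z+w) N
      = ftPartial Cinf θ π q z N + ftPartial Cinf θ π q w N := by
    intro z w N
    rw [ftPartial, ftPartial, ftPartial, ← Finset.sum_add_distrib]
    refine Finset.sum_congr rfl fun n _ => ?_
    rw [mul_add π z w, hadd_pow n (π*z) (π*w), add_mul, map_add, add_mul]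
  have hft_add : ∀ z w, ft (z+w) = ft z + ft w := by
    intro z w
    ext m
    have h1 := hft (z+w) m
    simp only [hftP_add] at h1
    have h2 := (hft z m).add (hft w m)
    simp only [← map_add] at h2
    rw [map_add]
    exact tendsto_nhds_unique h1 h2
  have hfq : ∀ (c : Fq) (n : ℕ), (algebraMap Fq Cinf c) ^ q ^ n = algebraMap Fq Cinf c := by
    intro c n
    rw [← map_pow]
    congr 1
    have := FiniteField.pow_card_pow n c
    rwa [← hq] at this
  have hftP_smul : ∀ (c : Fq) (z : Cinf) (N : ℕ),
      ftPartial Cinf θ π q (algebraMap Fq Cinf c * z) N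
        = PowerSeries.C (R := Cinf) (algebraMap Fq Cinf c) * ftPartial Cinf θ π q z N := by
    intro c z N
    rw [ftPartial, ftPartial, Finset.mul_sum]
    refine Finset.sum_congr rfl fun n _ => ?_
    have h1 : (π * (algebraMap Fq Cinf c * z)) ^ q ^ n
        = algebraMap Fq Cinf c * (π*z) ^ q ^ n := by
      rw [mul_left_comm, mul_pow, hfq]
    rw [h1, mul_assoc, map_mul, mul_assoc]
  have hft_smul : ∀ (c : Fq) (z : Cinf), ft (algebraMap Fq Cinf c * z)
      = PowerSeries.C (R := Cinf) (algebraMap Fq Cinf c) * ft z := by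
    intro c z
    ext m
    have h1 := hft (algebraMap Fq Cinf c * z) m
    simp only [hftP_smul, PowerSeries.coeff_C_mul] at h1
    have h2 := (hft z m).const_mul (algebraMap Fq Cinf c)
    rw [PowerSeries.coeff_C_mul]
    exact tendsto_nhds_unique h1 h2
  refine ⟨?_, ?_, ?_⟩
  · intro z w
    rw [hchi, hchi, hchi, hft_add, mul_add]
  · intro c z
    rw [hchi, hchi, hft_smul]
    ring
  · intro z
    set w : Cinf := π * z with hw
    set E : Cinf := eC Cinf θ π q z with hE
    set a : ℕ → Cinf := fun n => w ^ q ^ n * (carlitzD Cinf θ q n)⁻¹ with hadef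
    -- summability and the value of e_C
    have hanorm : ∀ n, ‖a n‖ = (‖w‖ / (q:ℝ) ^ n) ^ q ^ n := by
      intro n
      simp only [hadef]
      rw [norm_mul, norm_pow, norm_inv, hdnorm n, div_pow, div_eq_mul_inv,
        ← pow_mul, ← pow_mul, Nat.mul_comm (q ^ n) n]
    have hatend : Tendsto a atTop (nhds 0) := by
      rw [tendsto_zero_iff_norm_tendsto_zero]
      have hhalf : Tendsto (fun n : ℕ => (1/2:ℝ) ^ n) atTop (nhds 0) :=
        tendsto_pow_atTop_nhds_zero_of_lt_one (by norm_num) (by norm_num)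
      apply squeeze_zero' (Eventually.of_forall fun n => norm_nonneg _) ?_ hhalf
      have hev : ∀ᶠ n : ℕ in atTop, 2 * ‖w‖ ≤ (q:ℝ) ^ n :=
        (tendsto_pow_atTop_atTop_of_one_lt hqR1).eventually_ge_atTop (2 * ‖w‖)
      filter_upwards [hev] with n hn
      rw [hanorm n]
      have hqn : (0:ℝ) < (q:ℝ) ^ n := by positivity
      have h1 : ‖w‖ / (q:ℝ) ^ n ≤ 1/2 := by
        rw [div_le_div_iff₀ hqn (by norm_num)]; linarith
      calc (‖w‖ / (q:ℝ) ^ n) ^ q ^ n ≤ (1/2:ℝ) ^ q ^ n :=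
            pow_le_pow_left₀ (by positivity) h1 _
        _ ≤ (1/2:ℝ) ^ n := pow_le_pow_of_le_one (by norm_num) (by norm_num)
            (Nat.le_of_lt (Nat.lt_pow_self hq2 (n := n)))
    have hsummable : Summable (fun i : ℕ => (carlitzD Cinf θ q i)⁻¹ * w ^ q ^ i) := by
      apply aux_summable
      have h1 : (fun i : ℕ => (carlitzD Cinf θ q i)⁻¹ * w ^ q ^ i) = fun i => a i := by
        funext i; simp only [hadef]; ring
      rw [h1]
      exact hatend
    have hEsum : Tendsto (fun N => ∑ n ∈ Finset.range N, a n) atTop (nhds E) := by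
      have h1 := hsummable.hasSum.tendsto_sum_nat
      have h2 : E = ∑' i : ℕ, (carlitzD Cinf θ q i)⁻¹ * w ^ q ^ i := by
        rw [hE, eC, expC, hw]
      rw [h2]
      exact h1.congr (fun N => Finset.sum_congr rfl fun n _ => mul_comm _ _)
    -- power series infrastructure
    set G : ℕ → PowerSeries Cinf := fun n =>
      (PowerSeries.C (R := Cinf) (θ ^ q ^ n) - PowerSeries.X)⁻¹ with hGdef
    set F : ℕ → PowerSeries Cinf := ftPartial Cinf θ π q z with hFdef
    have hFeq : ∀ N, F N = ∑ n ∈ Finset.range N, PowerSeries.C (R := Cinf) (a n) * G n := by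
      intro N; rw [hFdef]; rfl
    set T : ℕ → PowerSeries Cinf := fun N =>
      ∑ n ∈ Finset.range N, PowerSeries.C (R := Cinf) (a n) with hTdef
    have hGmul : ∀ n, G n * (PowerSeries.C (R := Cinf) (θ ^ q ^ n) - PowerSeries.X) = 1 := by
      intro n
      exact PowerSeries.inv_mul_cancel _ (by simp [pow_ne_zero, hθ0])
    have hGstep : ∀ n, PowerSeries.map φ (G n) = G (n+1) := by
      intro n
      simp only [hGdef]
      rw [PowerSeries.eq_inv_iff_mul_eq_one (by simp [pow_ne_zero, hθ0])]
      have h1 : (PowerSeries.C (R := Cinf) (θ ^ q ^ (n+1)) - PowerSeries.X)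
          = PowerSeries.map φ (PowerSeries.C (R := Cinf) (θ ^ q ^ n) - PowerSeries.X) := by
        rw [map_sub, PowerSeries.map_C, PowerSeries.map_X, hφ, ← pow_mul, ← pow_succ]
      rw [h1, ← map_mul]
      have h2 : (PowerSeries.C (R := Cinf) (θ ^ q ^ n) - PowerSeries.X)⁻¹
          * (PowerSeries.C (R := Cinf) (θ ^ q ^ n) - PowerSeries.X) = 1 := hGmul n
      rw [h2, map_one]
    have hCkey : ∀ n : ℕ, PowerSeries.C (R := Cinf) (θ ^ q ^ n - θ) * G n
        = 1 + (PowerSeries.X - PowerSeries.C (R := Cinf) θ) * G n := by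
      intro n
      have h2 : (PowerSeries.C (R := Cinf) (θ ^ q ^ n) - PowerSeries.X) * G n = 1 := by
        rw [mul_comm]; exact hGmul n
      calc PowerSeries.C (R := Cinf) (θ ^ q ^ n - θ) * G n
          = (PowerSeries.C (R := Cinf) (θ ^ q ^ n) - PowerSeries.X) * G n
            + (PowerSeries.X - PowerSeries.C (R := Cinf) θ) * G n := by
            rw [← add_mul, map_sub]; ring_nf
        _ = 1 + (PowerSeries.X - PowerSeries.C (R := Cinf) θ) * G n := by rw [h2]
    have hG0 : (PowerSeries.X - PowerSeries.C (R := Cinf) θ) * G 0 = -1 := by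
      have h2 : (PowerSeries.C (R := Cinf) (θ ^ q ^ 0) - PowerSeries.X) * G 0 = 1 := by
        rw [mul_comm]; exact hGmul 0
      have h3 : (PowerSeries.X - PowerSeries.C (R := Cinf) θ)
          = -(PowerSeries.C (R := Cinf) (θ ^ q ^ 0) - PowerSeries.X) := by
        rw [pow_zero, pow_one]; ring
      rw [h3, neg_mul, h2]
    have hφa : ∀ n, φ (a n) = (θ ^ q ^ (n+1) - θ) * a (n+1) := by
      intro n
      simp only [hadef]
      rw [map_mul, map_inv₀, hφ, hφ, ← pow_mul, ← pow_succ, hdstep n]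
      field_simp [hθqne n, hdne n, pow_ne_zero]
    have hstep : ∀ N, PowerSeries.map φ (F N)
        = T (N+1) + (PowerSeries.X - PowerSeries.C (R := Cinf) θ) * F (N+1) := by
      intro N
      induction N with
      | zero =>
        have hF0 : F 0 = 0 := by rw [hFeq]; simp
        have hF1 : F 1 = PowerSeries.C (R := Cinf) (a 0) * G 0 := by
          rw [hFeq]; simp
        have hT1 : T 1 = PowerSeries.C (R := Cinf) (a 0) := by
          simp only [hTdef]; simp
        rw [hF0, map_zero, hT1, hF1,
          show (PowerSeries.X - PowerSeries.C (R := Cinf) θ) * (PowerSeries.C (R := Cinf) (a 0) * G 0)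
            = PowerSeries.C (R := Cinf) (a 0) * ((PowerSeries.X - PowerSeries.C (R := Cinf) θ) * G 0) from by
              ring, hG0]
        ring
      | succ N ih =>
        have hFsucc : ∀ M, F (M+1) = F M + PowerSeries.C (R := Cinf) (a M) * G M := by
          intro M; rw [hFeq, hFeq, Finset.sum_range_succ]
        have hTsucc : ∀ M, T (M+1) = T M + PowerSeries.C (R := Cinf) (a M) := by
          intro M; simp only [hTdef]; rw [Finset.sum_range_succ]
        rw [hFsucc N, map_add, ih, map_mul, PowerSeries.map_C, hGstep N, hφa N, map_mul,
          show PowerSeries.C (R := Cinf) (θ ^ q ^ (N+1) - θ) * PowerSeries.C (R := Cinf) (a (N+1)) * G (N+1)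
            = PowerSeries.C (R := Cinf) (a (N+1))
              * (PowerSeries.C (R := Cinf) (θ ^ q ^ (N+1) - θ) * G (N+1)) from by ring,
          hCkey (N+1), hTsucc (N+1), hFsucc (N+1)]
        ring
    -- coefficient limit tools
    have hXCco : ∀ (H : PowerSeries Cinf) (m : ℕ),
        PowerSeries.coeff (R := Cinf) m ((PowerSeries.X - PowerSeries.C (R := Cinf) θ) * H)
          = (if m = 0 then 0 else PowerSeries.coeff (R := Cinf) (m-1) H)
            - θ * PowerSeries.coeff (R := Cinf) m H := by
      intro H m
      rw [sub_mul, map_sub, PowerSeries.coeff_C_mul]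
      congr 1
      cases m with
      | zero => simp
      | succ m => rw [PowerSeries.coeff_succ_X_mul]; simp
    have hshift : ∀ (f : ℕ → Cinf) (L : Cinf), Tendsto f atTop (nhds L) →
        Tendsto (fun N => f (N+1)) atTop (nhds L) := by
      intro f L h
      exact h.comp (tendsto_add_atTop_nat 1)
    have hXCtend : ∀ (S : ℕ → PowerSeries Cinf) (Ω : PowerSeries Cinf),
        (∀ m, Tendsto (fun N => PowerSeries.coeff (R := Cinf) m (S N)) atTop
          (nhds (PowerSeries.coeff (R := Cinf) m Ω))) →
        ∀ m, Tendsto (fun N => PowerSeries.coeff (R := Cinf) m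
            ((PowerSeries.X - PowerSeries.C (R := Cinf) θ) * S N)) atTop
          (nhds (PowerSeries.coeff (R := Cinf) m ((PowerSeries.X - PowerSeries.C (R := Cinf) θ) * Ω))) := by
      intro S Ω hS m
      simp only [hXCco]
      apply Tendsto.sub
      · by_cases hm : m = 0
        · simp only [hm, if_pos rfl]
          exact tendsto_const_nhds
        · simp only [if_neg hm]
          exact hS (m-1)
      · exact (hS m).const_mul θ
    have hTtend : ∀ m, Tendsto (fun N => PowerSeries.coeff (R := Cinf) m (T N)) atTop
        (nhds (PowerSeries.coeff (R := Cinf) m (PowerSeries.C (R := Cinf) E))) := by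
      intro m
      have hco : ∀ N, PowerSeries.coeff (R := Cinf) m (T N)
          = if m = 0 then ∑ n ∈ Finset.range N, a n else 0 := by
        intro N
        simp only [hTdef, map_sum, PowerSeries.coeff_C]
        split_ifs with hm <;> simp
      simp only [hco, PowerSeries.coeff_C]
      split_ifs with hm
      · exact hEsum
      · exact tendsto_const_nhds
    have hfe : PowerSeries.map φ (ft z) = PowerSeries.C (R := Cinf) E
        + (PowerSeries.X - PowerSeries.C (R := Cinf) θ) * ft z := by
      ext m
      have hL : Tendsto (fun N => PowerSeries.coeff (R := Cinf) m (PowerSeries.map φ (F N))) atTop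
          (nhds (PowerSeries.coeff (R := Cinf) m (PowerSeries.map φ (ft z)))) := by
        simp only [PowerSeries.coeff_map, hφ]
        exact (hft z m).pow q
      have hR : Tendsto (fun N => PowerSeries.coeff (R := Cinf) m (PowerSeries.map φ (F N))) atTop
          (nhds (PowerSeries.coeff (R := Cinf) m (PowerSeries.C (R := Cinf) E
            + (PowerSeries.X - PowerSeries.C (R := Cinf) θ) * ft z))) := by
        simp only [hstep, map_add]
        exact ((hTtend m).comp (tendsto_add_atTop_nat 1)).add
          (hXCtend (fun N => F (N+1)) (ft z) (fun m' => hshift _ _ (hft z m')) m)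
      exact tendsto_nhds_unique hL hR
    -- the omega functional equation
    set P : ℕ → PowerSeries Cinf := fun N => ∏ i ∈ Finset.range N,
      (1 - PowerSeries.C (R := Cinf) ((θ ^ q ^ i)⁻¹) * PowerSeries.X)⁻¹ with hPdef
    have hωP : ∀ m, Tendsto (fun N => PowerSeries.coeff (R := Cinf) m
        (PowerSeries.C (R := Cinf) lam * P N)) atTop (nhds (PowerSeries.coeff (R := Cinf) m ω)) := hω
    have hfacmul : ∀ (b : Cinf), (1 - PowerSeries.C (R := Cinf) b * PowerSeries.X)⁻¹
        * (1 - PowerSeries.C (R := Cinf) b * PowerSeries.X) = 1 := by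
      intro b; exact PowerSeries.inv_mul_cancel _ (by simp)
    have hφfac : ∀ (b : Cinf), PowerSeries.map φ ((1 - PowerSeries.C (R := Cinf) b * PowerSeries.X)⁻¹)
        = (1 - PowerSeries.C (R := Cinf) (φ b) * PowerSeries.X)⁻¹ := by
      intro b
      rw [PowerSeries.eq_inv_iff_mul_eq_one (by simp)]
      have h1 : (1 - PowerSeries.C (R := Cinf) (φ b) * PowerSeries.X)
          = PowerSeries.map φ (1 - PowerSeries.C (R := Cinf) b * PowerSeries.X) := by
        rw [map_sub, map_one, map_mul, PowerSeries.map_C, PowerSeries.map_X]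
      rw [h1, ← map_mul, hfacmul, map_one]
    have hφθinv : ∀ i : ℕ, φ ((θ ^ q ^ i)⁻¹) = (θ ^ q ^ (i+1))⁻¹ := by
      intro i; rw [map_inv₀, hφ, ← pow_mul, ← pow_succ]
    have hkey0 : (PowerSeries.X - PowerSeries.C (R := Cinf) θ)
        * (1 - PowerSeries.C (R := Cinf) θ⁻¹ * PowerSeries.X)⁻¹ = PowerSeries.C (R := Cinf) (-θ) := by
      have h1 : (PowerSeries.X - PowerSeries.C (R := Cinf) θ)
          = PowerSeries.C (R := Cinf) (-θ) * (1 - PowerSeries.C (R := Cinf) θ⁻¹ * PowerSeries.X) := by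
        have hinv : -θ * θ⁻¹ = -1 := by field_simp
        rw [mul_sub, mul_one, ← mul_assoc, ← map_mul, hinv]
        simp only [map_neg, map_one]
        ring
      rw [h1, mul_assoc, PowerSeries.mul_inv_cancel _ (by simp), mul_one]
    have hWstep : ∀ N, PowerSeries.map φ (PowerSeries.C (R := Cinf) lam * P N)
        = (PowerSeries.X - PowerSeries.C (R := Cinf) θ) * (PowerSeries.C (R := Cinf) lam * P (N+1)) := by
      intro N
      have hPsucc : ∀ M, P (M+1) = P M
          * (1 - PowerSeries.C (R := Cinf) ((θ ^ q ^ M)⁻¹) * PowerSeries.X)⁻¹ := by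
        intro M; simp only [hPdef]; rw [Finset.prod_range_succ]
      induction N with
      | zero =>
        have hP0 : P 0 = 1 := by simp only [hPdef]; simp
        have hP1 : P 1 = (1 - PowerSeries.C (R := Cinf) θ⁻¹ * PowerSeries.X)⁻¹ := by
          simp only [hPdef]
          rw [Finset.prod_range_one, pow_zero, pow_one]
        have hlq : lam ^ q = -θ * lam := by
          conv_lhs => rw [show q = (q-1)+1 from by omega]
          rw [pow_succ, hlam]
        rw [hP0, hP1, mul_one, PowerSeries.map_C, hφ, hlq, map_mul,
          show (PowerSeries.X - PowerSeries.C (R := Cinf) θ)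
            * (PowerSeries.C (R := Cinf) lam * (1 - PowerSeries.C (R := Cinf) θ⁻¹ * PowerSeries.X)⁻¹)
            = PowerSeries.C (R := Cinf) lam * ((PowerSeries.X - PowerSeries.C (R := Cinf) θ)
              * (1 - PowerSeries.C (R := Cinf) θ⁻¹ * PowerSeries.X)⁻¹) from by ring, hkey0]
        ring
      | succ N ih =>
        rw [hPsucc N, ← mul_assoc, map_mul, ih, hφfac, hφθinv, hPsucc (N+1)]
        ring
    have hωfe : PowerSeries.map φ ω = (PowerSeries.X - PowerSeries.C (R := Cinf) θ) * ω := by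
      ext m
      have hL : Tendsto (fun N => PowerSeries.coeff (R := Cinf) m
          (PowerSeries.map φ (PowerSeries.C (R := Cinf) lam * P N))) atTop
          (nhds (PowerSeries.coeff (R := Cinf) m (PowerSeries.map φ ω))) := by
        simp only [PowerSeries.coeff_map, hφ]
        exact (hωP m).pow q
      have hR : Tendsto (fun N => PowerSeries.coeff (R := Cinf) m
          (PowerSeries.map φ (PowerSeries.C (R := Cinf) lam * P N))) atTop
          (nhds (PowerSeries.coeff (R := Cinf) m ((PowerSeries.X - PowerSeries.C (R := Cinf) θ) * ω))) := by
        simp only [hWstep]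
        exact hXCtend (fun N => PowerSeries.C (R := Cinf) lam * P (N+1)) ω
          (fun m' => hshift _ _ (hωP m')) m
      exact tendsto_nhds_unique hL hR
    have hω0 : PowerSeries.constantCoeff (R := Cinf) ω = lam := by
      have h2 : ∀ N, PowerSeries.coeff (R := Cinf) 0 (PowerSeries.C (R := Cinf) lam * P N) = lam := by
        intro N
        simp only [hPdef]
        rw [PowerSeries.coeff_zero_eq_constantCoeff, map_mul, PowerSeries.constantCoeff_C,
          map_prod]
        rw [Finset.prod_congr rfl (fun i _ => ?_), Finset.prod_const_one, mul_one]
        rw [PowerSeries.constantCoeff_inv]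
        simp
      have h1 := hωP 0
      simp only [h2] at h1
      rw [← PowerSeries.coeff_zero_eq_constantCoeff_apply]
      exact tendsto_nhds_unique h1 tendsto_const_nhds
    -- the chi functional equation
    set g : PowerSeries Cinf := (PowerSeries.X - PowerSeries.C (R := Cinf) θ) * ω with hgdef
    have hg0 : PowerSeries.constantCoeff (R := Cinf) g = -(θ * lam) := by
      rw [hgdef, map_mul, map_sub, PowerSeries.constantCoeff_X, PowerSeries.constantCoeff_C, hω0]
      ring
    have hg0ne : PowerSeries.constantCoeff (R := Cinf) g ≠ 0 := by
      rw [hg0]; simp [hθ0, hlam0]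
    have hωinv : PowerSeries.map φ ω⁻¹ = g⁻¹ := by
      rw [PowerSeries.eq_inv_iff_mul_eq_one hg0ne, ← hωfe, ← map_mul,
        PowerSeries.inv_mul_cancel _ (by rw [hω0]; exact hlam0), map_one]
    have hchi_fe : PowerSeries.map φ (chi z) = chi z + PowerSeries.C (R := Cinf) E * g⁻¹ := by
      rw [hchi z, map_mul, hωinv, hfe, mul_add]
      have hsplit : g⁻¹ * ((PowerSeries.X - PowerSeries.C (R := Cinf) θ) * ft z) = ω⁻¹ * ft z := by
        rw [hgdef, PowerSeries.mul_inv_rev]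
        have hXCinv : (PowerSeries.X - PowerSeries.C (R := Cinf) θ)⁻¹
            * (PowerSeries.X - PowerSeries.C (R := Cinf) θ) = 1 := by
          apply PowerSeries.inv_mul_cancel
          rw [map_sub, PowerSeries.constantCoeff_X, PowerSeries.constantCoeff_C]
          simpa using hθ0
        calc ω⁻¹ * (PowerSeries.X - PowerSeries.C (R := Cinf) θ)⁻¹
              * ((PowerSeries.X - PowerSeries.C (R := Cinf) θ) * ft z)
            = ω⁻¹ * (((PowerSeries.X - PowerSeries.C (R := Cinf) θ)⁻¹
              * (PowerSeries.X - PowerSeries.C (R := Cinf) θ)) * ft z) := by ring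
          _ = ω⁻¹ * ft z := by rw [hXCinv, one_mul]
      rw [hsplit]
      ring
    -- norm bounds
    have hfaccoeff : ∀ (i m : ℕ), ‖PowerSeries.coeff (R := Cinf) m
        ((1 - PowerSeries.C (R := Cinf) ((θ ^ q ^ i)⁻¹) * PowerSeries.X)⁻¹)‖ ≤ 1 := by
      intro i m
      rw [aux_geom_inv, PowerSeries.coeff_mk, norm_pow]
      apply pow_le_one₀ (norm_nonneg _)
      rw [norm_inv, norm_pow, hθ]
      exact inv_le_one_of_one_le₀ (one_le_pow₀ hqR1.le)
    have hPbound : ∀ N m, ‖PowerSeries.coeff (R := Cinf) m (P N)‖ ≤ 1 := by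
      intro N
      induction N with
      | zero =>
        intro m
        simp only [hPdef]
        rw [Finset.range_zero, Finset.prod_empty, PowerSeries.coeff_one]
        split_ifs <;> simp
      | succ N ih =>
        intro m
        have hPs : P (N+1) = P N
            * (1 - PowerSeries.C (R := Cinf) ((θ ^ q ^ N)⁻¹) * PowerSeries.X)⁻¹ := by
          simp only [hPdef]; rw [Finset.prod_range_succ]
        rw [hPs, PowerSeries.coeff_mul]
        apply IsUltrametricDist.norm_sum_le_of_forall_le_of_nonneg zero_le_one
        intro x hx
        rw [norm_mul]
        exact le_trans (mul_le_mul (ih x.1) (hfaccoeff N x.2) (norm_nonneg _) zero_le_one) (by norm_num)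
    have hωbound : ∀ m, ‖PowerSeries.coeff (R := Cinf) m ω‖ ≤ ‖lam‖ := by
      intro m
      apply le_of_tendsto (hωP m).norm
      filter_upwards with N
      rw [PowerSeries.coeff_C_mul, norm_mul]
      calc ‖lam‖ * ‖PowerSeries.coeff (R := Cinf) m (P N)‖ ≤ ‖lam‖ * 1 :=
            mul_le_mul_of_nonneg_left (hPbound N m) (norm_nonneg _)
        _ = ‖lam‖ := mul_one _
    have hgbound : ∀ m, ‖PowerSeries.coeff (R := Cinf) m g‖
        ≤ ‖PowerSeries.constantCoeff (R := Cinf) g‖ := by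
      intro m
      rw [hg0, norm_neg, norm_mul, hθ, hgdef, hXCco]
      apply (aux_norm_sub_le_max _ _).trans
      apply max_le
      · split_ifs with hm
        · rw [norm_zero]; positivity
        · calc ‖PowerSeries.coeff (R := Cinf) (m-1) ω‖ ≤ ‖lam‖ := hωbound _
            _ ≤ (q:ℝ) * ‖lam‖ := by nlinarith [norm_nonneg lam]
      · rw [norm_mul, hθ]
        exact mul_le_mul_of_nonneg_left (hωbound m) (by positivity)
    have hginvb : ∀ m, ‖PowerSeries.coeff (R := Cinf) m g⁻¹‖ ≤ 1 := by
      intro m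
      refine (aux_coeff_inv_bound g hg0ne hgbound m).trans ?_
      rw [hg0, norm_neg, norm_mul, hθ]
      have h1 : (1:ℝ) ≤ (q:ℝ) * ‖lam‖ := by nlinarith [norm_nonneg lam]
      exact inv_le_one_of_one_le₀ h1
    -- the pointwise bound
    have hmain : ∀ m, ‖PowerSeries.coeff (R := Cinf) m (chi z)‖
        ≤ max 1 (‖E‖ ^ ((1:ℝ)/(q:ℝ))) := by
      intro m
      have heq : (PowerSeries.coeff (R := Cinf) m (chi z)) ^ q
          = PowerSeries.coeff (R := Cinf) m (chi z) + E * PowerSeries.coeff (R := Cinf) m g⁻¹ := by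
        have h := congrArg (PowerSeries.coeff (R := Cinf) m) hchi_fe
        rwa [PowerSeries.coeff_map, hφ, map_add, PowerSeries.coeff_C_mul] at h
      set c := PowerSeries.coeff (R := Cinf) m (chi z) with hcdef
      rcases le_or_gt ‖c‖ 1 with hc1 | hc1
      · exact le_max_of_le_left hc1
      · have hub : ‖c‖ ^ q ≤ ‖E‖ := by
          have h1 : ‖c ^ q‖ ≤ max ‖c‖ ‖E * PowerSeries.coeff (R := Cinf) m g⁻¹‖ := by
            rw [heq]; exact IsUltrametricDist.norm_add_le_max _ _
          rw [norm_pow] at h1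
          have h2 : ‖E * PowerSeries.coeff (R := Cinf) m g⁻¹‖ ≤ ‖E‖ := by
            rw [norm_mul]
            calc ‖E‖ * ‖PowerSeries.coeff (R := Cinf) m g⁻¹‖ ≤ ‖E‖ * 1 :=
                  mul_le_mul_of_nonneg_left (hginvb m) (norm_nonneg _)
              _ = ‖E‖ := mul_one _
          have h3 : ‖c‖ < ‖c‖ ^ q := by
            conv_lhs => rw [← pow_one ‖c‖]
            exact pow_lt_pow_right₀ hc1 hq2
          rcases max_cases ‖c‖ ‖E * PowerSeries.coeff (R := Cinf) m g⁻¹‖ with ⟨he, _⟩ | ⟨he, _⟩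
          · rw [he] at h1; linarith
          · rw [he] at h1; linarith
        have h4 : ‖c‖ ≤ ‖E‖ ^ ((1:ℝ)/(q:ℝ)) := by
          have h5 := Real.rpow_le_rpow (by positivity) hub
            (by positivity : (0:ℝ) ≤ 1/(q:ℝ))
          rwa [← Real.rpow_natCast ‖c‖ q, ← Real.rpow_mul (norm_nonneg c), mul_one_div,
            div_self (Nat.cast_ne_zero.mpr hq0), Real.rpow_one] at h5
        exact le_max_of_le_right h4
    rw [_root_.gaussNorm]
    exact ciSup_le hmain
end
end

section
/- For $z \in \mathbb{C}_\infty$, the function $\chi_t(z) = \omega(t)^{-1} f_t(z) \in \mathbb{T}$ vanishes if and only if $z = 0$. -/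
noncomputable section

open Polynomial Filter PowerSeries

/-- Coefficients of the inverse of `C a - X` for `a ≠ 0`. -/
lemma st15_geomInv {k : Type*} [Field k] {a : k} (ha : a ≠ 0) :
    (PowerSeries.C (R := k) a - PowerSeries.X)⁻¹ = PowerSeries.mk fun m => a⁻¹ ^ (m + 1) := by
  rw [PowerSeries.inv_eq_iff_mul_eq_one (by simp [ha])]
  ext n
  rw [mul_sub]
  cases n with
  | zero =>
    simp [PowerSeries.coeff_mul_C, inv_mul_cancel₀ ha]
  | succ n =>
    rw [map_sub, PowerSeries.coeff_mul_C, PowerSeries.coeff_succ_mul_X, PowerSeries.coeff_mk,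
      PowerSeries.coeff_mk, PowerSeries.coeff_one, if_neg (Nat.succ_ne_zero n),
      pow_succ, mul_assoc, inv_mul_cancel₀ ha, mul_one, sub_self]

lemma st15_coeff_ftPartial {Cinf : Type*} [NormedField Cinf] (θ π : Cinf) (q : ℕ) (z : Cinf)
    (N m : ℕ) (hθ : θ ≠ 0) :
    PowerSeries.coeff (R := Cinf) m (ftPartial Cinf θ π q z N)
      = ∑ n ∈ Finset.range N,
          (carlitzD Cinf θ q n)⁻¹ * (π * z * (θ ^ (m + 1))⁻¹) ^ q ^ n := by
  unfold ftPartial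
  rw [map_sum]
  refine Finset.sum_congr rfl fun n _ => ?_
  rw [st15_geomInv (pow_ne_zero _ hθ), PowerSeries.coeff_C_mul, PowerSeries.coeff_mk]
  have h1 : ((θ ^ q ^ n)⁻¹) ^ (m + 1) = ((θ ^ (m + 1))⁻¹) ^ q ^ n := by
    rw [← inv_pow, ← inv_pow, ← pow_mul, ← pow_mul, mul_comm]
  rw [h1, mul_pow, mul_pow]
  ring

/-- Partial-sum convergence implies `HasSum` in a complete ultrametric group. -/
lemma st15_hasSum {G : Type*} [NormedAddCommGroup G] [IsUltrametricDist G] [CompleteSpace G]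
    {f : ℕ → G} {L : G}
    (h : Tendsto (fun N => ∑ n ∈ Finset.range N, f n) atTop (nhds L)) : HasSum f L := by
  have h0 : Tendsto f atTop (nhds 0) := by
    have h1 := (h.comp (tendsto_add_atTop_nat 1)).sub h
    simpa [Finset.sum_range_succ] using h1
  have hs : Summable f :=
    NonarchimedeanAddGroup.summable_of_tendsto_cofinite_zero
      (by rwa [Nat.cofinite_eq_atTop])
  have := hs.hasSum
  rwa [tendsto_nhds_unique h this.tendsto_sum_nat]

lemma st15_norm_algebraMap {Fq Cinf : Type*} [Field Fq] [Fintype Fq] [NormedField Cinf]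
    [Algebra Fq Cinf] {c : Fq} (hc : c ≠ 0) : ‖algebraMap Fq Cinf c‖ = 1 := by
  have h1 : (algebraMap Fq Cinf c) ^ (Fintype.card Fq - 1) = 1 := by
    rw [← map_pow, FiniteField.pow_card_sub_one_eq_one c hc, map_one]
  have h2 : ‖algebraMap Fq Cinf c‖ ^ (Fintype.card Fq - 1) = 1 := by
    rw [← norm_pow, h1, norm_one]
  have hk : Fintype.card Fq - 1 ≠ 0 := by
    have := Fintype.one_lt_card (α := Fq); omega
  have hnn : (0 : ℝ) ≤ ‖algebraMap Fq Cinf c‖ := norm_nonneg _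
  rcases lt_trichotomy ‖algebraMap Fq Cinf c‖ 1 with h | h | h
  · exact absurd h2 (by nlinarith [pow_lt_one₀ hnn h hk])
  · exact h
  · exact absurd h2 (by nlinarith [one_lt_pow₀ h hk])

lemma st15_norm_aeval {Fq Cinf : Type*} [Field Fq] [Fintype Fq] [NormedField Cinf]
    [IsUltrametricDist Cinf] [Algebra Fq Cinf] (θ : Cinf) (hθ : 1 < ‖θ‖) :
    ∀ a : Polynomial Fq, a ≠ 0 → ‖aeval θ a‖ = ‖θ‖ ^ a.natDegree := by
  suffices H : ∀ n (a : Polynomial Fq), a.natDegree ≤ n → a ≠ 0 →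
      ‖aeval θ a‖ = ‖θ‖ ^ a.natDegree from fun a ha => H a.natDegree a le_rfl ha
  intro n
  induction n with
  | zero =>
    intro a hdeg ha
    have hd0 : a.natDegree = 0 := Nat.le_zero.mp hdeg
    have hC := Polynomial.eq_C_of_natDegree_eq_zero hd0
    have hc : a.coeff 0 ≠ 0 := fun h => ha (by rw [hC, h, map_zero])
    rw [hd0, pow_zero]
    conv_lhs => rw [hC]
    rw [Polynomial.aeval_C]
    exact st15_norm_algebraMap hc
  | succ n ih =>
    intro a hdeg ha
    rcases Nat.lt_or_ge a.natDegree (n + 1) with h | h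
    · exact ih a (Nat.lt_succ_iff.mp h) ha
    have hd : a.natDegree = n + 1 := le_antisymm hdeg h
    have hsum : aeval θ a
        = aeval θ a.eraseLead + algebraMap Fq Cinf a.leadingCoeff * θ ^ a.natDegree := by
      conv_lhs => rw [← Polynomial.eraseLead_add_C_mul_X_pow a]
      rw [map_add, map_mul, map_pow, Polynomial.aeval_C, Polynomial.aeval_X]
    have hlead : ‖algebraMap Fq Cinf a.leadingCoeff * θ ^ a.natDegree‖ = ‖θ‖ ^ a.natDegree := by
      rw [norm_mul, norm_pow,
        st15_norm_algebraMap (Polynomial.leadingCoeff_ne_zero.mpr ha), one_mul]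
    rcases eq_or_ne a.eraseLead 0 with h0 | h0
    · rw [hsum, h0, map_zero, zero_add, hlead]
    · have he : a.eraseLead.natDegree < a.natDegree :=
        (Polynomial.eraseLead_natDegree_lt_or_eraseLead_eq_zero a).resolve_right h0
      have hih : ‖aeval θ a.eraseLead‖ = ‖θ‖ ^ a.eraseLead.natDegree := ih a.eraseLead (by omega) h0
      have hlt : ‖aeval θ a.eraseLead‖ < ‖θ‖ ^ a.natDegree := by
        rw [hih]
        exact pow_lt_pow_right₀ hθ he
      rw [hsum, IsUltrametricDist.norm_add_eq_max_of_norm_ne_norm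
        (by rw [hlead]; exact ne_of_lt hlt), hlead, max_eq_right (le_of_lt (hlead ▸ hlt))]

/-- for `z ∈ ℂ∞`, `χ_t(z) = ω(t)⁻¹ f_t(z)` vanishes iff `z = 0`. -/
theorem statement15
    (Fq : Type*) [Field Fq] [Fintype Fq]
    (Cinf : Type*) [NormedField Cinf] [CompleteSpace Cinf] [IsAlgClosed Cinf]
    [IsUltrametricDist Cinf] [Algebra Fq Cinf] (θ : Cinf)
    (q : ℕ) (hq : q = Fintype.card Fq) (hθ : ‖θ‖ = (q : ℝ))
    (π : Cinf) (hπ : ‖π‖ = (q : ℝ) ^ ((q : ℝ) / ((q : ℝ) - 1)))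
    (hker : ∀ z : Cinf, expC Cinf θ q z = 0 ↔ ∃ a : Polynomial Fq, z = π * aeval θ a)
    (lam : Cinf) (hlam : lam ^ (q - 1) = -θ)
    (ω : PowerSeries Cinf)
    (hω : ∀ m : ℕ,
      Tendsto
        (fun N : ℕ => PowerSeries.coeff (R := Cinf) m
          (PowerSeries.C (R := Cinf) lam *
            ∏ i ∈ Finset.range N,
              (1 - PowerSeries.C (R := Cinf) ((θ ^ q ^ i)⁻¹) * PowerSeries.X)⁻¹))
        atTop (nhds (PowerSeries.coeff (R := Cinf) m ω)))
    (ft : Cinf → PowerSeries Cinf)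
    (hft : ∀ (z : Cinf) (m : ℕ),
      Tendsto (fun N : ℕ => PowerSeries.coeff (R := Cinf) m (ftPartial Cinf θ π q z N))
        atTop (nhds (PowerSeries.coeff (R := Cinf) m (ft z)))) :
    ∀ z : Cinf, ω⁻¹ * ft z = 0 ↔ z = 0 := by
  have hq2 : 2 ≤ q := hq ▸ Fintype.one_lt_card
  have hq1R : (1 : ℝ) < (q : ℝ) := by exact_mod_cast (by omega : 1 < q)
  have hθ1 : 1 < ‖θ‖ := by rw [hθ]; exact hq1R
  have hθ0 : θ ≠ 0 := by
    intro h; rw [h, norm_zero] at hθ; exact absurd hθ.symm (by positivity)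
  have hπ0 : π ≠ 0 := by
    intro h
    rw [h, norm_zero] at hπ
    exact absurd hπ.symm (ne_of_gt (Real.rpow_pos_of_pos (by linarith) _))
  have hlam0 : lam ≠ 0 := by
    intro h
    rw [h, zero_pow (by omega : q - 1 ≠ 0)] at hlam
    exact hθ0 (neg_eq_zero.mp hlam.symm)
  -- constant coefficient of ω is lam
  have hωc : PowerSeries.constantCoeff (R := Cinf) ω = lam := by
    have hconst : ∀ N : ℕ,
        PowerSeries.coeff (R := Cinf) 0
          (PowerSeries.C (R := Cinf) lam *
            ∏ i ∈ Finset.range N,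
              (1 - PowerSeries.C (R := Cinf) ((θ ^ q ^ i)⁻¹) * PowerSeries.X)⁻¹) = lam := by
      intro N
      rw [PowerSeries.coeff_zero_eq_constantCoeff, map_mul, PowerSeries.constantCoeff_C,
        map_prod]
      rw [Finset.prod_congr rfl (fun i _ => ?_), Finset.prod_const_one, mul_one]
      rw [PowerSeries.constantCoeff_inv]
      simp
    have h1 := hω 0
    simp only [hconst] at h1
    have h2 := tendsto_nhds_unique h1 (tendsto_const_nhds (x := lam))
    rwa [PowerSeries.coeff_zero_eq_constantCoeff] at h2
  have hωc0 : PowerSeries.constantCoeff (R := Cinf) ω ≠ 0 := hωc ▸ hlam0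
  -- ft 0 = 0
  have hft0 : ft 0 = 0 := by
    ext m
    have h1 := hft 0 m
    have h2 : ∀ N : ℕ, PowerSeries.coeff (R := Cinf) m (ftPartial Cinf θ π q 0 N) = 0 := by
      intro N
      unfold ftPartial
      rw [map_sum]
      refine Finset.sum_eq_zero fun n _ => ?_
      rw [mul_zero, zero_pow (pow_ne_zero n (by omega : q ≠ 0)), zero_mul, map_zero, zero_mul,
        map_zero]
    simp only [h2] at h1
    have := tendsto_nhds_unique h1 (tendsto_const_nhds (x := (0 : Cinf)))
    rw [this, map_zero]
  intro z
  constructor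
  · intro h
    have hftz : ft z = 0 := by
      calc ft z = ω * (ω⁻¹ * ft z) := by
            rw [← mul_assoc, PowerSeries.mul_inv_cancel ω hωc0, one_mul]
        _ = 0 := by rw [h, mul_zero]
    by_contra hz
    obtain ⟨m, hm⟩ := pow_unbounded_of_one_lt ‖z‖ hq1R
    have hm1 : ‖z‖ < ‖θ‖ ^ (m + 1) := by
      rw [hθ]
      calc ‖z‖ < (q : ℝ) ^ m := hm
        _ ≤ (q : ℝ) ^ (m + 1) := pow_le_pow_right₀ (le_of_lt hq1R) (by omega)
    have h1 := hft z m
    rw [hftz, map_zero] at h1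
    simp only [st15_coeff_ftPartial θ π q z _ m hθ0] at h1
    have hsum : HasSum (fun n => (carlitzD Cinf θ q n)⁻¹ * (π * z * (θ ^ (m + 1))⁻¹) ^ q ^ n)
        (0 : Cinf) := st15_hasSum h1
    have hexp : expC Cinf θ q (π * z * (θ ^ (m + 1))⁻¹) = 0 := hsum.tsum_eq
    obtain ⟨a, ha⟩ := (hker _).mp hexp
    rw [mul_assoc] at ha
    have hza : z * (θ ^ (m + 1))⁻¹ = aeval θ a := mul_left_cancel₀ hπ0 ha
    have hnorm : ‖aeval θ a‖ < 1 := by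
      rw [← hza, norm_mul, norm_inv, norm_pow, ← div_eq_mul_inv, div_lt_one (by positivity)]
      exact hm1
    have haz : aeval θ a ≠ 0 := by
      intro h0
      rw [h0, mul_eq_zero] at hza
      rcases hza with h0 | h0
      · exact hz h0
      · exact inv_ne_zero (pow_ne_zero _ hθ0) h0
    have ha0 : a ≠ 0 := fun h0 => haz (by rw [h0, map_zero])
    rw [st15_norm_aeval θ hθ1 a ha0] at hnorm
    exact absurd hnorm (not_lt.mpr (one_le_pow₀ (le_of_lt hθ1)))
  · intro h
    rw [h, hft0, mul_zero]
end
end
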